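/- arXiv:1903.11530 — 4 statements merged into one kernel-verified Lean document; each statement's English description precedes it below -/
import Mathlib

section
/- Let T ∈ ℝ, τ > 0, ω(t) = exp((t−T)/τ), x(t) = ω(t) for t ≤ T, and let I : (−∞,T] → ℝ be continuous, nonnegative and bounded, with V₀(t) = ∫_t^T I(s) ds. Fix n ≥ 1 and let P_n be the space of real polynomials of degree < n. Suppose ψ ∈ P_n is nonzero and satisfies, for some λ ∈ ℝ, ∫_{−∞}^T φ(x(t)) V₀(t) ψ(x(t)) ω(t) dt = λ ∫_{−∞}^T φ(x(t)) (T−t) ψ(x(t)) ω(t) dt for every φ ∈ P_n, and suppose λ is maximal in the sense that ∫_{−∞}^T φ(x(t))² V₀(t) ω(t) dt ≤ λ ∫_{−∞}^T φ(x(t))² (T−t) ω(t) dt for every φ ∈ P_n. Then the expectation of dI/dt in the state ψ, defined by integration by parts with boundary value λ as λ·ψ(1)² − ∫_{−∞}^T I(t) · (d/dt)[ψ(x(t))² ω(t)] dt, is nonnegative. -/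
open MeasureTheory Set Polynomial Filter Topology

lemma expInt (T b : ℝ) (hb : 0 < b) :
    IntegrableOn (fun t => Real.exp (b * (t - T))) (Iic T) := by
  have h1 : IntegrableOn (fun x => Real.exp (-b * x)) (Ioi (-T)) :=
    exp_neg_integrableOn_Ioi (-T) hb
  have h2 : Integrable ((Ioi (-T)).indicator (fun x => Real.exp (-b * x))) :=
    (integrable_indicator_iff measurableSet_Ioi).2 h1
  have h3 := h2.comp_neg
  have h4 : ((Ioi (-T)).indicator (fun x => Real.exp (-b * x))) ∘ (fun t : ℝ => -t)
      = (Iio T).indicator (fun t => Real.exp (b * t)) := by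
    funext t
    by_cases ht : t < T
    · have : -t ∈ Ioi (-T) := by simpa using ht
      rw [Function.comp_apply, indicator_of_mem this, indicator_of_mem (mem_Iio.2 ht)]
      ring_nf
    · have : ¬ (-t ∈ Ioi (-T)) := by simpa using ht
      simp [Function.comp, indicator_of_notMem this,
        indicator_of_notMem (by simpa using ht : ¬ t ∈ Iio T)]
  have h5 : Integrable ((Iio T).indicator (fun t => Real.exp (b * t))) := by
    rw [← h4]; exact h3
  have h6 : IntegrableOn (fun t => Real.exp (b * t)) (Iio T) :=
    (integrable_indicator_iff measurableSet_Iio).1 h5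
  have h7 : IntegrableOn (fun t => Real.exp (b * t)) (Iic T) := by
    rwa [integrableOn_Iic_iff_integrableOn_Iio]
  have h8 : IntegrableOn (fun t => Real.exp (b * t) * Real.exp (-(b * T))) (Iic T) :=
    h7.mul_const _
  refine h8.congr_fun (fun t _ => ?_) measurableSet_Iic
  dsimp only; rw [← Real.exp_add]; ring_nf

lemma domInt (T τ : ℝ) (hτ : 0 < τ) (f : ℝ → ℝ)
    (hm : AEStronglyMeasurable f (volume.restrict (Iic T))) (K : ℝ)
    (hb : ∀ t ≤ T, |f t| ≤ K * Real.exp ((1/(2*τ)) * (t - T))) :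
    IntegrableOn f (Iic T) := by
  have base : IntegrableOn (fun t => K * Real.exp ((1/(2*τ)) * (t - T))) (Iic T) :=
    (expInt T (1/(2*τ)) (by positivity)).const_mul K
  refine base.mono' hm ?_
  rw [ae_restrict_iff' measurableSet_Iic]
  exact ae_of_all _ fun t ht => hb t ht

lemma degD {q : Polynomial ℝ} {n : ℕ} (h : q.degree < (n : WithBot ℕ)) :
    (Polynomial.X * Polynomial.derivative q).degree < (n : WithBot ℕ) := by
  rcases eq_or_ne (Polynomial.derivative q) 0 with h0 | h0
  · rw [h0, mul_zero, Polynomial.degree_zero]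
    exact WithBot.bot_lt_coe n
  · have hq : q ≠ 0 := by
      intro h1; apply h0; rw [h1]; simp
    have hnd : q.natDegree ≠ 0 := by
      intro h1
      apply h0
      rw [Polynomial.eq_C_of_natDegree_eq_zero h1]
      simp
    have h3 : (Polynomial.derivative q).natDegree < q.natDegree :=
      Polynomial.natDegree_derivative_lt hnd
    have h4 : q.natDegree < n := by
      rwa [Polynomial.degree_eq_natDegree hq, Nat.cast_lt] at h
    rw [Polynomial.degree_mul, Polynomial.degree_X, Polynomial.degree_eq_natDegree h0]
    have : ((1 : WithBot ℕ) + ((Polynomial.derivative q).natDegree : WithBot ℕ))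
        = ((1 + (Polynomial.derivative q).natDegree : ℕ) : WithBot ℕ) := by push_cast; rfl
    rw [this, Nat.cast_lt]
    omega

lemma polyid (ψ : Polynomial ℝ) :
    Polynomial.X * Polynomial.derivative (Polynomial.X * Polynomial.derivative (Polynomial.X * ψ * ψ))
      = Polynomial.X * (2 * ((ψ + Polynomial.X * Polynomial.derivative ψ) * (ψ + Polynomial.X * Polynomial.derivative ψ))
          + ψ * (2 * (Polynomial.X * Polynomial.derivative (Polynomial.X * Polynomial.derivative ψ)) - ψ)) := by
  simp only [Polynomial.derivative_mul, Polynomial.derivative_add, Polynomial.derivative_X,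
    one_mul, mul_one]
  ring

/-- In the state of maximal aggregated execution flow `V/t`, the expectation of
`dI/dt` (defined by integration by parts with boundary value `λ`) is nonnegative. -/
theorem stmt_0 (T τ : ℝ) (hτ : 0 < τ)
    (ω x : ℝ → ℝ)
    (hω : ∀ t, ω t = Real.exp ((t - T) / τ))
    (hx : ∀ t, x t = ω t)
    (I : ℝ → ℝ)
    (hIc : ContinuousOn I (Set.Iic T))
    (hInn : ∀ t ≤ T, 0 ≤ I t)
    (hIb : ∃ M, ∀ t ≤ T, I t ≤ M)
    (V₀ : ℝ → ℝ) (hV : ∀ t, V₀ t = ∫ s in t..T, I s)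
    (n : ℕ) (hn : 1 ≤ n)
    (ψ : Polynomial ℝ) (hψ0 : ψ ≠ 0) (hψd : ψ.degree < (n : WithBot ℕ))
    (lam : ℝ)
    (heig : ∀ φ : Polynomial ℝ, φ.degree < (n : WithBot ℕ) →
      ∫ t in Set.Iic T, φ.eval (x t) * V₀ t * ψ.eval (x t) * ω t
        = lam * ∫ t in Set.Iic T, φ.eval (x t) * (T - t) * ψ.eval (x t) * ω t)
    (hmax : ∀ φ : Polynomial ℝ, φ.degree < (n : WithBot ℕ) →
      ∫ t in Set.Iic T, (φ.eval (x t)) ^ 2 * V₀ t * ω t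
        ≤ lam * ∫ t in Set.Iic T, (φ.eval (x t)) ^ 2 * (T - t) * ω t) :
    0 ≤ lam * (ψ.eval 1) ^ 2
        - ∫ t in Set.Iic T, I t * deriv (fun s => (ψ.eval (x s)) ^ 2 * ω s) t := by
  obtain ⟨M, hM⟩ := hIb
  have hM0 : 0 ≤ M := le_trans (hInn T le_rfl) (hM T le_rfl)
  set e : ℝ → ℝ := fun t => Real.exp ((t - T) / τ) with he_def
  have he_pos : ∀ t : ℝ, 0 < e t := fun t => Real.exp_pos _
  have he_le1 : ∀ t ≤ T, e t ≤ 1 := by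
    intro t ht
    have h1 : t - T ≤ 0 := sub_nonpos.2 ht
    exact Real.exp_le_one_iff.2 (div_nonpos_of_nonpos_of_nonneg h1 hτ.le)
  have he_T : e T = 1 := by simp [he_def]
  have he_cont : Continuous e := Real.continuous_exp.comp (by fun_prop)
  have he_half : ∀ t ≤ T, e t ≤ Real.exp ((1/(2*τ)) * (t - T)) := by
    intro t ht
    apply Real.exp_le_exp.2
    have h0 : (1/(2*τ)) * (t - T) - (t - T)/τ = (T - t)/(2*τ) := by
      field_simp; ring
    have h1 : 0 ≤ (T - t)/(2*τ) := div_nonneg (by linarith) (by positivity)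
    linarith
  have hTt : ∀ t ≤ T, (T - t) * e t ≤ (2*τ) * Real.exp ((1/(2*τ)) * (t - T)) := by
    intro t ht
    have h1 : (T - t)/(2*τ) + 1 ≤ Real.exp ((T-t)/(2*τ)) := Real.add_one_le_exp _
    have h2 : T - t ≤ (2*τ) * Real.exp ((T-t)/(2*τ)) := by
      have h1' := mul_le_mul_of_nonneg_left h1 (by positivity : (0:ℝ) ≤ 2*τ)
      have h1'' : (2*τ) * ((T - t)/(2*τ) + 1) = (T-t) + 2*τ := by field_simp
      rw [h1''] at h1'
      linarith
    have h3 : Real.exp ((T-t)/(2*τ)) * e t = Real.exp ((1/(2*τ)) * (t - T)) := by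
      rw [he_def]
      show Real.exp ((T-t)/(2*τ)) * Real.exp ((t - T)/τ) = _
      rw [← Real.exp_add]
      congr 1
      field_simp
      ring
    calc (T - t) * e t ≤ ((2*τ) * Real.exp ((T-t)/(2*τ))) * e t :=
          mul_le_mul_of_nonneg_right h2 (he_pos t).le
      _ = (2*τ) * Real.exp ((1/(2*τ)) * (t - T)) := by rw [mul_assoc, h3]
  -- extended flow J and primitive W
  set J : ℝ → ℝ := fun t => I (min t T) with hJ_def
  have hJc : Continuous J :=
    hIc.comp_continuous (continuous_id.min continuous_const) (fun t => min_le_right t T)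
  have hJ0 : ∀ t, 0 ≤ J t := fun t => hInn _ (min_le_right t T)
  have hJM : ∀ t, J t ≤ M := fun t => hM _ (min_le_right t T)
  have hJI : ∀ t ≤ T, J t = I t := by
    intro t ht
    simp only [hJ_def, min_eq_left ht]
  set W : ℝ → ℝ := fun t => ∫ s in t..T, J s with hW_def
  have hWd : ∀ t, HasDerivAt W (-(J t)) t := by
    intro t
    exact intervalIntegral.integral_hasDerivAt_left (hJc.intervalIntegrable _ _)
      (hJc.stronglyMeasurableAtFilter _ _) hJc.continuousAt
  have hWc : Continuous W := by
    have hd : Differentiable ℝ W := fun t => (hWd t).differentiableAt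
    exact hd.continuous
  have hWT : W T = 0 := intervalIntegral.integral_same
  have hW0 : ∀ t ≤ T, 0 ≤ W t := fun t ht =>
    intervalIntegral.integral_nonneg ht (fun s _ => hJ0 s)
  have hWM : ∀ t ≤ T, W t ≤ M * (T - t) := by
    intro t ht
    have h1 : W t ≤ ∫ s in t..T, M :=
      intervalIntegral.integral_mono_on ht (hJc.intervalIntegrable _ _)
        intervalIntegrable_const (fun s _ => hJM s)
    rw [intervalIntegral.integral_const, smul_eq_mul] at h1
    linarith [h1]
  have hVW : ∀ t ≤ T, V₀ t = W t := by
    intro t ht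
    rw [hV]
    apply intervalIntegral.integral_congr
    intro s hs
    rw [uIcc_of_le ht] at hs
    exact (hJI s hs.2).symm
  -- derivatives of polynomial compositions with e
  have hed : ∀ t, HasDerivAt e (e t / τ) t := by
    intro t
    have h1 : HasDerivAt (fun s : ℝ => (s - T) / τ) (1/τ) t := by
      simpa using ((hasDerivAt_id t).sub_const T).div_const τ
    have h2 := h1.exp
    simp only [he_def]
    convert h2 using 1
    simp [he_def]
    ring
  have hcomp : ∀ (q : Polynomial ℝ) (t : ℝ),
      HasDerivAt (fun s => Polynomial.eval (e s) q)
        (Polynomial.eval (e t) (Polynomial.X * Polynomial.derivative q) / τ) t := by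
    intro q t
    have h1 := (q.hasDerivAt (e t)).comp t (hed t)
    refine h1.congr_deriv ?_
    simp [Polynomial.eval_mul]
    ring
  -- the relevant polynomials
  set p : Polynomial ℝ := Polynomial.X * ψ * ψ with hp_def
  set p1 : Polynomial ℝ := Polynomial.X * Polynomial.derivative p with hp1_def
  set p2 : Polynomial ℝ := Polynomial.X * Polynomial.derivative p1 with hp2_def
  set χ : Polynomial ℝ := ψ + Polynomial.X * Polynomial.derivative ψ with hchi_def
  set ρ : Polynomial ℝ := 2 * (Polynomial.X * Polynomial.derivative (Polynomial.X * Polynomial.derivative ψ)) - ψ with hrho_def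
  have hkey : p2 = Polynomial.X * (2 * (χ * χ) + ψ * ρ) := by
    rw [hp2_def, hp1_def, hp_def, hchi_def, hrho_def]
    exact polyid ψ
  have hchid : χ.degree < (n : WithBot ℕ) := by
    rw [hchi_def]
    exact (Polynomial.degree_add_le _ _).trans_lt (max_lt hψd (degD hψd))
  have hrhod : ρ.degree < (n : WithBot ℕ) := by
    have hdd := degD (degD hψd)
    have h2 : (2 * (Polynomial.X * Polynomial.derivative (Polynomial.X * Polynomial.derivative ψ))).degree < (n : WithBot ℕ) := by
      have heq : 2 * (Polynomial.X * Polynomial.derivative (Polynomial.X * Polynomial.derivative ψ))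
          = Polynomial.X * Polynomial.derivative (Polynomial.X * Polynomial.derivative ψ)
            + Polynomial.X * Polynomial.derivative (Polynomial.X * Polynomial.derivative ψ) := by ring
      rw [heq]
      exact (Polynomial.degree_add_le _ _).trans_lt (max_lt hdd hdd)
    rw [hrho_def]
    exact (Polynomial.degree_sub_le _ _).trans_lt (max_lt h2 hψd)
  -- identification of the integrand
  have hfun : (fun s => (ψ.eval (x s)) ^ 2 * ω s) = (fun s => Polynomial.eval (e s) p) := by
    funext s
    rw [hx s, hω s, hp_def]
    show Polynomial.eval (e s) ψ ^ 2 * (e s) = _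
    simp [Polynomial.eval_mul]
    ring
  have hderiv : ∀ t, deriv (fun s => (ψ.eval (x s)) ^ 2 * ω s) t = Polynomial.eval (e t) p1 / τ := by
    intro t
    rw [hfun, hp1_def]
    exact (hcomp p t).deriv
  -- integrability machine
  have intA : ∀ (q : Polynomial ℝ) (f : ℝ → ℝ), ContinuousOn f (Iic T) →
      ∀ (Kf : ℝ), (∀ t ≤ T, |f t| ≤ Kf * (1 + (T - t))) →
      IntegrableOn (fun t => f t * Polynomial.eval (e t) q * e t) (Iic T) := by
    intro q f hfc Kf hKf
    obtain ⟨Cq, hCq⟩ := IsCompact.exists_bound_of_continuousOn isCompact_Icc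
      ((q.continuous).continuousOn : ContinuousOn (fun y : ℝ => Polynomial.eval y q) (Icc 0 1))
    have hCq0 : 0 ≤ Cq := le_trans (norm_nonneg _) (hCq 1 (by norm_num))
    have hKf0 : 0 ≤ Kf := by
      have := hKf T le_rfl
      have h2 := abs_nonneg (f T)
      simp at this
      linarith
    have hmeas : AEStronglyMeasurable (fun t => f t * Polynomial.eval (e t) q * e t)
        (volume.restrict (Iic T)) :=
      (((hfc.mul ((q.continuous.comp he_cont).continuousOn)).mul
        he_cont.continuousOn).aestronglyMeasurable measurableSet_Iic)
    apply domInt T τ hτ _ hmeas (Kf * Cq * (1 + 2*τ))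
    intro t ht
    have h1 : |f t| ≤ Kf * (1 + (T - t)) := hKf t ht
    have h2 : |Polynomial.eval (e t) q| ≤ Cq := by
      have := hCq (e t) ⟨(he_pos t).le, he_le1 t ht⟩
      simpa using this
    have h3 : e t ≤ Real.exp ((1/(2*τ)) * (t - T)) := he_half t ht
    have h4 : (T - t) * e t ≤ 2*τ * Real.exp ((1/(2*τ)) * (t - T)) := by
      have := hTt t ht
      linarith
    have h5 : (0:ℝ) < e t := he_pos t
    have h6 : |f t * Polynomial.eval (e t) q * e t| = |f t| * |Polynomial.eval (e t) q| * e t := by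
      rw [abs_mul, abs_mul, abs_of_pos h5]
    rw [h6]
    have h7 : |f t| * |Polynomial.eval (e t) q| ≤ (Kf * (1 + (T - t))) * Cq :=
      mul_le_mul h1 h2 (abs_nonneg _) (mul_nonneg hKf0 (by linarith))
    have h8 : |f t| * |Polynomial.eval (e t) q| * e t ≤ (Kf * (1 + (T - t))) * Cq * e t :=
      mul_le_mul_of_nonneg_right h7 h5.le
    have h9 : (Kf * (1 + (T - t))) * Cq * e t
        = Kf * Cq * (e t) + Kf * Cq * ((T - t) * e t) := by ring
    have h10 : 0 ≤ Kf * Cq := mul_nonneg hKf0 hCq0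
    have h11 := mul_le_mul_of_nonneg_left h3 h10
    have h12 := mul_le_mul_of_nonneg_left h4 h10
    rw [h9] at h8
    calc |f t| * |Polynomial.eval (e t) q| * e t
        ≤ Kf * Cq * (e t) + Kf * Cq * ((T - t) * e t) := h8
      _ ≤ Kf * Cq * Real.exp ((1/(2*τ)) * (t - T))
          + Kf * Cq * (2*τ * Real.exp ((1/(2*τ)) * (t - T))) := by linarith
      _ = Kf * Cq * (1 + 2*τ) * Real.exp ((1/(2*τ)) * (t - T)) := by ring
  -- individual integrability facts
  have hWbd : ∀ t ≤ T, |W t| ≤ M * (1 + (T - t)) := by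
    intro t ht
    rw [abs_of_nonneg (hW0 t ht)]
    have h1 := hWM t ht
    nlinarith [hW0 t ht, sub_nonneg.2 ht]
  have hJbd : ∀ t ≤ T, |J t| ≤ M * (1 + (T - t)) := by
    intro t ht
    rw [abs_of_nonneg (hJ0 t)]
    have h1 := hJM t
    nlinarith [sub_nonneg.2 ht]
  have hTbd : ∀ t ≤ T, |T - t| ≤ 1 * (1 + (T - t)) := by
    intro t ht
    rw [abs_of_nonneg (by linarith : (0:ℝ) ≤ T - t)]
    linarith
  have hTcon : ContinuousOn (fun t : ℝ => T - t) (Iic T) :=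
    (continuous_const.sub continuous_id).continuousOn
  have int1 : IntegrableOn (fun t => J t * (Polynomial.eval (e t) p1 / τ)) (Iic T) := by
    refine (intA (Polynomial.C (1/τ) * Polynomial.derivative p) J hJc.continuousOn M hJbd).congr_fun
      (fun t _ => ?_) measurableSet_Iic
    rw [hp1_def]
    simp [Polynomial.eval_mul]
    ring
  have int2 : IntegrableOn (fun t => W t * (Polynomial.eval (e t) p2 / τ^2)) (Iic T) := by
    refine (intA (Polynomial.C (1/τ^2) * Polynomial.derivative p1) W hWc.continuousOn M hWbd).congr_fun
      (fun t _ => ?_) measurableSet_Iic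
    rw [hp2_def]
    simp [Polynomial.eval_mul]
    ring
  have int3 : IntegrableOn (fun t => (T - t) * (Polynomial.eval (e t) p2 / τ^2)) (Iic T) := by
    refine (intA (Polynomial.C (1/τ^2) * Polynomial.derivative p1) (fun t => T - t) hTcon 1 hTbd).congr_fun
      (fun t _ => ?_) measurableSet_Iic
    rw [hp2_def]
    simp [Polynomial.eval_mul]
    ring
  have int4 : IntegrableOn (fun t => (Polynomial.eval (e t) χ)^2 * W t * e t) (Iic T) := by
    refine (intA (χ * χ) W hWc.continuousOn M hWbd).congr_fun (fun t _ => ?_) measurableSet_Iic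
    simp only [Polynomial.eval_mul]
    ring
  have int5 : IntegrableOn (fun t => Polynomial.eval (e t) ψ * Polynomial.eval (e t) ρ * W t * e t) (Iic T) := by
    refine (intA (ψ * ρ) W hWc.continuousOn M hWbd).congr_fun (fun t _ => ?_) measurableSet_Iic
    simp only [Polynomial.eval_mul]
    ring
  have int6 : IntegrableOn (fun t => (Polynomial.eval (e t) χ)^2 * (T - t) * e t) (Iic T) := by
    refine (intA (χ * χ) (fun t => T - t) hTcon 1 hTbd).congr_fun (fun t _ => ?_) measurableSet_Iic
    simp only [Polynomial.eval_mul]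
    ring
  have int7 : IntegrableOn (fun t => Polynomial.eval (e t) ψ * Polynomial.eval (e t) ρ * (T - t) * e t) (Iic T) := by
    refine (intA (ψ * ρ) (fun t => T - t) hTcon 1 hTbd).congr_fun (fun t _ => ?_) measurableSet_Iic
    simp only [Polynomial.eval_mul]
    ring
  -- limits at -infinity
  have hatBot1 : Tendsto (fun a : ℝ => (a - T)/τ) atBot atBot := by
    apply Tendsto.atBot_div_const hτ
    simpa [sub_eq_add_neg] using tendsto_atBot_add_const_right atBot (-T) tendsto_id
  have h_e0 : Tendsto e atBot (𝓝 0) := Real.tendsto_exp_atBot.comp hatBot1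
  have h_Te0 : Tendsto (fun a : ℝ => (T - a) * e a) atBot (𝓝 0) := by
    have h1 := Real.tendsto_pow_mul_exp_neg_atTop_nhds_zero 1
    have h2 : Tendsto (fun a : ℝ => (T - a)/τ) atBot atTop := by
      apply Tendsto.atTop_div_const hτ
      exact (tendsto_atTop_add_const_left atBot T tendsto_neg_atBot_atTop).congr (fun a => by ring)
    have h3 := h1.comp h2
    have h5 : Tendsto (fun a : ℝ => (T - a) * e a) atBot (𝓝 (τ * 0)) := by
      apply Filter.Tendsto.congr _ (h3.const_mul τ)
      intro a
      show τ * (((T - a)/τ)^1 * Real.exp (-((T - a)/τ))) = (T - a) * e a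
      rw [pow_one]
      have hne : -((T - a)/τ) = (a - T)/τ := by ring
      rw [hne]
      show τ * ((T - a)/τ * Real.exp ((a - T)/τ)) = (T - a) * Real.exp ((a - T)/τ)
      field_simp
    simpa using h5
  have squeeze : ∀ (f : ℝ → ℝ) (C : ℝ), (∀ a ≤ T, |f a| ≤ C * ((T - a) * e a)) →
      Tendsto f atBot (𝓝 0) := by
    intro f C hfa
    refine squeeze_zero_norm' (a := fun a => C * ((T - a) * e a)) ?_ ?_
    · filter_upwards [eventually_le_atBot T] with a ha
      exact hfa a ha
    · simpa using h_Te0.const_mul C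
  -- boundary limits
  obtain ⟨C1, hC1⟩ := IsCompact.exists_bound_of_continuousOn isCompact_Icc
    (((Polynomial.derivative p).continuous).continuousOn :
      ContinuousOn (fun y : ℝ => Polynomial.eval y (Polynomial.derivative p)) (Icc 0 1))
  have hC10 : 0 ≤ C1 := le_trans (norm_nonneg _) (hC1 1 (by norm_num))
  have hb2 : ∀ a ≤ T, |Polynomial.eval (e a) p1| ≤ C1 * e a := by
    intro a ha
    rw [hp1_def]
    simp only [Polynomial.eval_mul, Polynomial.eval_X]
    rw [abs_mul, abs_of_pos (he_pos a)]
    have := hC1 (e a) ⟨(he_pos a).le, he_le1 a ha⟩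
    rw [Real.norm_eq_abs] at this
    nlinarith [he_pos a]
  have lim1 : Tendsto (fun a => W a * (Polynomial.eval (e a) p1 / τ)) atBot (𝓝 0) := by
    apply squeeze _ (M * C1 / τ)
    intro a ha
    rw [abs_mul, abs_div, abs_of_pos hτ]
    have b1 : |W a| ≤ M * (T - a) := by
      rw [abs_of_nonneg (hW0 a ha)]; exact hWM a ha
    have b3 : |W a| * |Polynomial.eval (e a) p1| ≤ (M * (T - a)) * (C1 * e a) :=
      mul_le_mul b1 (hb2 a ha) (abs_nonneg _) (mul_nonneg hM0 (by linarith))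
    calc |W a| * (|Polynomial.eval (e a) p1| / τ) = (|W a| * |Polynomial.eval (e a) p1|) / τ := by
          ring
      _ ≤ ((M * (T - a)) * (C1 * e a)) / τ := by gcongr
      _ = M * C1 / τ * ((T - a) * e a) := by ring
  have lim2a : Tendsto (fun a => (T - a) * (Polynomial.eval (e a) p1 / τ)) atBot (𝓝 0) := by
    apply squeeze _ (C1 / τ)
    intro a ha
    rw [abs_mul, abs_div, abs_of_pos hτ, abs_of_nonneg (by linarith : (0:ℝ) ≤ T - a)]
    have b3 : (T - a) * |Polynomial.eval (e a) p1| ≤ (T - a) * (C1 * e a) :=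
      mul_le_mul_of_nonneg_left (hb2 a ha) (by linarith)
    calc (T - a) * (|Polynomial.eval (e a) p1| / τ) = ((T - a) * |Polynomial.eval (e a) p1|) / τ := by
          ring
      _ ≤ ((T - a) * (C1 * e a)) / τ := by gcongr
      _ = C1 / τ * ((T - a) * e a) := by ring
  have lim2b : Tendsto (fun a => Polynomial.eval (e a) p) atBot (𝓝 0) := by
    have h1 := (p.continuous.tendsto 0).comp h_e0
    have h2 : Polynomial.eval (0:ℝ) p = 0 := by simp [hp_def]
    rw [h2] at h1
    exact h1
  -- first integration by parts identity
  have key1 : ∀ a : ℝ, (∫ t in a..T, J t * (Polynomial.eval (e t) p1 / τ))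
      = (∫ t in a..T, W t * (Polynomial.eval (e t) p2 / τ^2)) + W a * (Polynomial.eval (e a) p1 / τ) := by
    intro a
    have hF : ∀ t : ℝ, HasDerivAt (fun s => W s * (Polynomial.eval (e s) p1 / τ))
        (-(J t * (Polynomial.eval (e t) p1 / τ)) + W t * (Polynomial.eval (e t) p2 / τ^2)) t := by
      intro t
      have h1 := (hWd t).mul ((hcomp p1 t).div_const τ)
      refine h1.congr_deriv ?_
      rw [hp2_def]
      ring
    have hcont1 : Continuous (fun t => J t * (Polynomial.eval (e t) p1 / τ)) :=
      hJc.mul ((p1.continuous.comp he_cont).div_const τ)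
    have hcont2 : Continuous (fun t => W t * (Polynomial.eval (e t) p2 / τ^2)) :=
      hWc.mul ((p2.continuous.comp he_cont).div_const (τ^2))
    have heq := intervalIntegral.integral_eq_sub_of_hasDerivAt (fun t _ => hF t)
      ((hcont1.neg.add hcont2).intervalIntegrable a T)
    rw [intervalIntegral.integral_add (f := fun t => -(J t * (Polynomial.eval (e t) p1 / τ)))
      (g := fun t => W t * (Polynomial.eval (e t) p2 / τ^2)) (hcont1.neg.intervalIntegrable a T)
      (hcont2.intervalIntegrable a T), intervalIntegral.integral_neg] at heq
    simp only [hWT, zero_mul, zero_sub] at heq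
    linarith [heq]
  have hFTC1 : (∫ t in Iic T, J t * (Polynomial.eval (e t) p1 / τ))
      = ∫ t in Iic T, W t * (Polynomial.eval (e t) p2 / τ^2) := by
    have hL := intervalIntegral_tendsto_integral_Iic T int1 (tendsto_id (x := atBot))
    have hR := (intervalIntegral_tendsto_integral_Iic T int2 (tendsto_id (x := atBot))).add lim1
    have hR' := hR.congr (fun a => (key1 a).symm)
    have huniq := tendsto_nhds_unique hL hR'
    simpa using huniq
  -- second integration by parts identity
  have key2 : ∀ a : ℝ, (∫ t in a..T, (T - t) * (Polynomial.eval (e t) p2 / τ^2))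
      = (ψ.eval 1)^2 - ((T - a) * (Polynomial.eval (e a) p1 / τ) + Polynomial.eval (e a) p) := by
    intro a
    have hG : ∀ t : ℝ, HasDerivAt
        (fun s => (T - s) * (Polynomial.eval (e s) p1 / τ) + Polynomial.eval (e s) p)
        ((T - t) * (Polynomial.eval (e t) p2 / τ^2)) t := by
      intro t
      have h1 : HasDerivAt (fun s : ℝ => T - s) (-1) t := (hasDerivAt_id t).const_sub T
      have h2 := (h1.mul ((hcomp p1 t).div_const τ)).add (hcomp p t)
      refine h2.congr_deriv ?_
      rw [hp2_def, ← hp1_def]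
      ring
    have hcont3 : Continuous (fun t => (T - t) * (Polynomial.eval (e t) p2 / τ^2)) :=
      (continuous_const.sub continuous_id).mul ((p2.continuous.comp he_cont).div_const (τ^2))
    have heq := intervalIntegral.integral_eq_sub_of_hasDerivAt (fun t _ => hG t)
      (hcont3.intervalIntegrable a T)
    have hGT : (T - T) * (Polynomial.eval (e T) p1 / τ) + Polynomial.eval (e T) p = (ψ.eval 1)^2 := by
      rw [he_T, hp_def]
      simp [Polynomial.eval_mul]
      ring
    rw [heq]
    simp only [hGT]
  have hFTC2 : (∫ t in Iic T, (T - t) * (Polynomial.eval (e t) p2 / τ^2)) = (ψ.eval 1)^2 := by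
    have hL := intervalIntegral_tendsto_integral_Iic T int3 (tendsto_id (x := atBot))
    have hR : Tendsto (fun a => (ψ.eval 1)^2
        - ((T - a) * (Polynomial.eval (e a) p1 / τ) + Polynomial.eval (e a) p)) atBot
        (𝓝 ((ψ.eval 1)^2 - (0 + 0))) := tendsto_const_nhds.sub (lim2a.add lim2b)
    have hR' := hR.congr (fun a => (key2 a).symm)
    have huniq := tendsto_nhds_unique hL hR'
    simpa using huniq
  -- splitting of the integrals according to the algebraic identity
  have hptW : ∀ t : ℝ, W t * (Polynomial.eval (e t) p2 / τ^2)
      = (2 * ((Polynomial.eval (e t) χ)^2 * W t * e t)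
          + Polynomial.eval (e t) ψ * Polynomial.eval (e t) ρ * W t * e t) * (1/τ^2) := by
    intro t
    rw [hkey]
    simp only [Polynomial.eval_mul, Polynomial.eval_add, Polynomial.eval_X, Polynomial.eval_ofNat]
    ring
  have hptT : ∀ t : ℝ, (T - t) * (Polynomial.eval (e t) p2 / τ^2)
      = (2 * ((Polynomial.eval (e t) χ)^2 * (T - t) * e t)
          + Polynomial.eval (e t) ψ * Polynomial.eval (e t) ρ * (T - t) * e t) * (1/τ^2) := by
    intro t
    rw [hkey]
    simp only [Polynomial.eval_mul, Polynomial.eval_add, Polynomial.eval_X, Polynomial.eval_ofNat]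
    ring
  set A1 := ∫ t in Iic T, (Polynomial.eval (e t) χ)^2 * W t * e t with hA1_def
  set A2 := ∫ t in Iic T, Polynomial.eval (e t) ψ * Polynomial.eval (e t) ρ * W t * e t with hA2_def
  set B1 := ∫ t in Iic T, (Polynomial.eval (e t) χ)^2 * (T - t) * e t with hB1_def
  set B2 := ∫ t in Iic T, Polynomial.eval (e t) ψ * Polynomial.eval (e t) ρ * (T - t) * e t with hB2_def
  have hsplitW : (∫ t in Iic T, W t * (Polynomial.eval (e t) p2 / τ^2)) = (2 * A1 + A2) * (1/τ^2) := by
    have h1 : (∫ t in Iic T, W t * (Polynomial.eval (e t) p2 / τ^2))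
        = ∫ t in Iic T, (2 * ((Polynomial.eval (e t) χ)^2 * W t * e t)
            + Polynomial.eval (e t) ψ * Polynomial.eval (e t) ρ * W t * e t) * (1/τ^2) :=
      setIntegral_congr_fun measurableSet_Iic (fun t _ => hptW t)
    rw [h1, integral_mul_const, integral_add (int4.const_mul 2) int5, integral_const_mul,
      hA1_def, hA2_def]
  have hsplitT : (∫ t in Iic T, (T - t) * (Polynomial.eval (e t) p2 / τ^2)) = (2 * B1 + B2) * (1/τ^2) := by
    have h1 : (∫ t in Iic T, (T - t) * (Polynomial.eval (e t) p2 / τ^2))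
        = ∫ t in Iic T, (2 * ((Polynomial.eval (e t) χ)^2 * (T - t) * e t)
            + Polynomial.eval (e t) ψ * Polynomial.eval (e t) ρ * (T - t) * e t) * (1/τ^2) :=
      setIntegral_congr_fun measurableSet_Iic (fun t _ => hptT t)
    rw [h1, integral_mul_const, integral_add (int6.const_mul 2) int7, integral_const_mul,
      hB1_def, hB2_def]
  -- transfer of the eigenvalue conditions
  have hA1le : A1 ≤ lam * B1 := by
    have h := hmax χ hchid
    have e1 : (∫ t in Iic T, (χ.eval (x t))^2 * V₀ t * ω t) = A1 := by
      rw [hA1_def]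
      apply setIntegral_congr_fun measurableSet_Iic
      intro t ht
      simp only [hx, hω, hVW t ht, he_def]
    have e2 : (∫ t in Iic T, (χ.eval (x t))^2 * (T - t) * ω t) = B1 := by
      rw [hB1_def]
      apply setIntegral_congr_fun measurableSet_Iic
      intro t ht
      simp only [hx, hω, he_def]
    rw [e1, e2] at h
    exact h
  have hA2eq : A2 = lam * B2 := by
    have h := heig ρ hrhod
    have e1 : (∫ t in Iic T, ρ.eval (x t) * V₀ t * ψ.eval (x t) * ω t) = A2 := by
      rw [hA2_def]
      apply setIntegral_congr_fun measurableSet_Iic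
      intro t ht
      simp only [hx, hω, hVW t ht, he_def]
      ring
    have e2 : (∫ t in Iic T, ρ.eval (x t) * (T - t) * ψ.eval (x t) * ω t) = B2 := by
      rw [hB2_def]
      apply setIntegral_congr_fun measurableSet_Iic
      intro t ht
      simp only [hx, hω, he_def]
      ring
    rw [e1, e2] at h
    exact h
  -- final assembly
  have hIJ : (∫ t in Iic T, I t * deriv (fun s => (ψ.eval (x s))^2 * ω s) t)
      = ∫ t in Iic T, J t * (Polynomial.eval (e t) p1 / τ) := by
    apply setIntegral_congr_fun measurableSet_Iic
    intro t ht
    show I t * deriv (fun s => (ψ.eval (x s))^2 * ω s) t = J t * (Polynomial.eval (e t) p1 / τ)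
    rw [hderiv t, hJI t ht]
  have hBB : (2 * B1 + B2) * (1/τ^2) = (ψ.eval 1)^2 := by rw [← hsplitT]; exact hFTC2
  have hfinal : (∫ t in Iic T, I t * deriv (fun s => (ψ.eval (x s))^2 * ω s) t)
      ≤ lam * (ψ.eval 1)^2 := by
    rw [hIJ, hFTC1, hsplitW]
    calc (2 * A1 + A2) * (1/τ^2) ≤ (2 * (lam * B1) + lam * B2) * (1/τ^2) := by
          apply mul_le_mul_of_nonneg_right _ (by positivity)
          linarith [hA1le, hA2eq]
      _ = lam * ((2 * B1 + B2) * (1/τ^2)) := by ring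
      _ = lam * (ψ.eval 1)^2 := by rw [hBB]
  linarith [hfinal]
end

section
/- Let T ∈ ℝ, τ > 0, ω(t) = exp((t−T)/τ), x(t) = ω(t) for t ≤ T, and let I : (−∞,T] → ℝ be continuous, nonnegative and bounded, with V₀(t) = ∫_t^T I(s) ds. Fix n ≥ 1 and let P_n be the space of real polynomials of degree < n. If ψ ∈ P_n is nonzero and satisfies, for some λ ∈ ℝ, ∫_{−∞}^T φ(x(t)) V₀(t) ψ(x(t)) ω(t) dt = λ ∫_{−∞}^T φ(x(t)) (T−t) ψ(x(t)) ω(t) dt for every φ ∈ P_n, then λ · ∫_{−∞}^T ψ(x(t))² ω(t) dt = ∫_{−∞}^T I(t) ψ(x(t))² ω(t) dt; that is, in the eigenstates of the aggregated execution flow V/t, the aggregated execution flow equals the local execution flow: λ = ⟨ψ|I|ψ⟩/⟨ψ|ψ⟩. -/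
open MeasureTheory Set Topology Filter

private lemma aux_exp_integrable (T c : ℝ) (hc : 0 < c) :
    IntegrableOn (fun t => Real.exp ((t - T) / c)) (Set.Iic T) := by
  have hcont : Continuous fun t : ℝ => Real.exp ((t - T) / c) :=
    Real.continuous_exp.comp ((continuous_id.sub continuous_const).div_const c)
  apply integrableOn_Iic_of_intervalIntegral_norm_bounded c T
    (a := fun r : ℝ => r) (l := Filter.atBot) (fun _ => hcont.integrableOn_Ioc)
    Filter.tendsto_id
  filter_upwards with i
  have h1 : (∫ s in i..T, ‖Real.exp ((s - T) / c)‖) = ∫ s in i..T, Real.exp ((s - T) / c) :=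
    intervalIntegral.integral_congr fun y _ => Real.norm_of_nonneg (Real.exp_pos _).le
  have h2 : (∫ s in i..T, Real.exp ((s - T) / c)) = ∫ s in (i - T)..(T - T), Real.exp (s / c) :=
    intervalIntegral.integral_comp_sub_right (fun s => Real.exp (s / c)) T
  have h3 : (∫ s in (i - T)..(T - T), Real.exp (s / c))
      = c * (Real.exp ((T - T) / c) - Real.exp ((i - T) / c)) := by
    rw [intervalIntegral.integral_comp_div (fun s => Real.exp s) hc.ne',
      integral_exp, smul_eq_mul]
  have h4 : (0:ℝ) < Real.exp ((i - T) / c) := Real.exp_pos _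
  have h5 : Real.exp ((T - T) / c) = 1 := by simp
  rw [h1, h2, h3, h5]
  nlinarith

/-- In the eigenstates of the aggregated execution flow `V/t`, the aggregated
execution flow equals the local execution flow: `λ = ⟨ψ|I|ψ⟩/⟨ψ|ψ⟩`. -/
theorem stmt_1 (T τ : ℝ) (hτ : 0 < τ)
    (ω x : ℝ → ℝ)
    (hω : ∀ t, ω t = Real.exp ((t - T) / τ))
    (hx : ∀ t, x t = ω t)
    (I : ℝ → ℝ)
    (hIc : ContinuousOn I (Set.Iic T))
    (hInn : ∀ t ≤ T, 0 ≤ I t)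
    (hIb : ∃ M, ∀ t ≤ T, I t ≤ M)
    (V₀ : ℝ → ℝ) (hV : ∀ t, V₀ t = ∫ s in t..T, I s)
    (n : ℕ) (hn : 1 ≤ n)
    (ψ : Polynomial ℝ) (hψ0 : ψ ≠ 0) (hψd : ψ.degree < (n : WithBot ℕ))
    (lam : ℝ)
    (heig : ∀ φ : Polynomial ℝ, φ.degree < (n : WithBot ℕ) →
      ∫ t in Set.Iic T, φ.eval (x t) * V₀ t * ψ.eval (x t) * ω t
        = lam * ∫ t in Set.Iic T, φ.eval (x t) * (T - t) * ψ.eval (x t) * ω t) :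
    lam * ∫ t in Set.Iic T, (ψ.eval (x t)) ^ 2 * ω t
      = ∫ t in Set.Iic T, I t * (ψ.eval (x t)) ^ 2 * ω t := by
  classical
  obtain ⟨M₀, hM₀⟩ := hIb
  set M := max M₀ 0 with hM
  have hMnn : 0 ≤ M := le_max_right _ _
  have hIM : ∀ t ≤ T, I t ≤ M := fun t ht => (hM₀ t ht).trans (le_max_left _ _)
  have hτ' : (0:ℝ) < 2 * τ := by linarith
  -- basic facts about x and ω
  have hxe : ∀ t, x t = Real.exp ((t - T) / τ) := fun t => (hx t).trans (hω t)
  have hxpos : ∀ t, 0 < x t := fun t => (hxe t) ▸ Real.exp_pos _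
  have hωpos : ∀ t, 0 < ω t := fun t => (hω t) ▸ Real.exp_pos _
  have hωx : ∀ t, ω t = x t := fun t => (hx t).symm
  have hxle : ∀ t ≤ T, x t ≤ 1 := by
    intro t ht
    rw [hxe t, Real.exp_le_one_iff]
    exact div_nonpos_of_nonpos_of_nonneg (by linarith) hτ.le
  have hωle : ∀ t ≤ T, ω t ≤ Real.exp ((t - T) / (2 * τ)) := by
    intro t ht
    rw [hω t]
    apply Real.exp_le_exp.mpr
    rw [div_le_div_iff₀ hτ hτ']
    nlinarith
  have hTt : ∀ t ≤ T, (T - t) * ω t ≤ 2 * τ * Real.exp ((t - T) / (2 * τ)) := by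
    intro t ht
    have h2 := Real.add_one_le_exp ((T - t) / (2 * τ))
    have h3 : (T - t) / (2 * τ) * (2 * τ) = T - t := div_mul_cancel₀ _ hτ'.ne'
    have h1 : (T - t) ≤ 2 * τ * Real.exp ((T - t) / (2 * τ)) := by
      nlinarith [Real.exp_pos ((T - t) / (2 * τ))]
    calc (T - t) * ω t ≤ (2 * τ * Real.exp ((T - t) / (2 * τ))) * ω t :=
          mul_le_mul_of_nonneg_right h1 (hωpos t).le
      _ = 2 * τ * Real.exp ((t - T) / (2 * τ)) := by
          rw [hω t, mul_assoc, ← Real.exp_add]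
          congr 2
          field_simp
          ring
  -- bound for polynomial values along x
  have polybound : ∀ Q : Polynomial ℝ, ∃ C, 0 ≤ C ∧ ∀ t ≤ T, |Q.eval (x t)| ≤ C := by
    intro Q
    obtain ⟨C, hC⟩ := (isCompact_Icc (a := (0:ℝ)) (b := 1)).exists_bound_of_continuousOn
      Q.continuous.continuousOn
    refine ⟨max C 0, le_max_right _ _, fun t ht => ?_⟩
    have h1 := hC (x t) ⟨(hxpos t).le, hxle t ht⟩
    rw [Real.norm_eq_abs] at h1
    exact h1.trans (le_max_left _ _)
  -- master integrability criterion
  have master : ∀ F : ℝ → ℝ, AEStronglyMeasurable F (volume.restrict (Set.Iic T)) →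
      ∀ K : ℝ, (∀ t ≤ T, |F t| ≤ K * Real.exp ((t - T) / (2 * τ))) →
      IntegrableOn F (Set.Iic T) := by
    intro F hm K hK
    refine Integrable.mono' ((aux_exp_integrable T (2 * τ) hτ').const_mul K) hm ?_
    filter_upwards [ae_restrict_mem measurableSet_Iic] with t ht
    simpa [Real.norm_eq_abs] using hK t ht
  -- V₀ facts
  have hVnn : ∀ t ≤ T, 0 ≤ V₀ t := by
    intro t ht
    rw [hV t]
    exact intervalIntegral.integral_nonneg ht fun u hu => hInn u hu.2
  have hIint : ∀ t ≤ T, IntervalIntegrable I volume t T := by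
    intro t ht
    apply ContinuousOn.intervalIntegrable
    rw [uIcc_of_le ht]
    exact hIc.mono fun u hu => hu.2
  have hVle : ∀ t ≤ T, V₀ t ≤ M * (T - t) := by
    intro t ht
    rw [hV t]
    calc (∫ s in t..T, I s) ≤ ∫ _ in t..T, M :=
        intervalIntegral.integral_mono_on ht (hIint t ht) intervalIntegrable_const
          fun u hu => hIM u hu.2
      _ = M * (T - t) := by rw [intervalIntegral.integral_const, smul_eq_mul, mul_comm]
  have hVfun : V₀ = fun u => ∫ s in u..T, I s := funext hV
  have hVderiv : ∀ t ∈ Iio T, HasDerivAt V₀ (-(I t)) t := by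
    intro t ht
    have hca : ContinuousAt I t := hIc.continuousAt (Iic_mem_nhds ht)
    have hms : StronglyMeasurableAtFilter I (𝓝 t) volume :=
      ContinuousOn.stronglyMeasurableAtFilter isOpen_Iio (hIc.mono Iio_subset_Iic_self) t ht
    have h1 := intervalIntegral.integral_hasDerivAt_left (hIint t ht.le) hms hca
    rw [hVfun]
    exact h1
  have hV0T : V₀ T = 0 := by rw [hV T, intervalIntegral.integral_same]
  have hVcontT : ContinuousWithinAt V₀ (Iic T) T := by
    have hb : Filter.Tendsto (fun u => M * (T - u)) (nhdsWithin T (Iic T)) (𝓝 0) := by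
      have h1 : Filter.Tendsto (fun u : ℝ => M * (T - u)) (𝓝 T) (𝓝 (M * (T - T))) :=
        (continuous_const.mul (continuous_const.sub continuous_id)).tendsto T
      simpa using h1.mono_left nhdsWithin_le_nhds
    have h2 : Filter.Tendsto V₀ (nhdsWithin T (Iic T)) (𝓝 0) := by
      apply squeeze_zero' ?_ ?_ hb
      · filter_upwards [self_mem_nhdsWithin] with u hu using hVnn u hu
      · filter_upwards [self_mem_nhdsWithin] with u hu using hVle u hu
    show Filter.Tendsto V₀ (nhdsWithin T (Iic T)) (𝓝 (V₀ T))
    rw [hV0T]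
    exact h2
  have hVcont : ContinuousOn V₀ (Iic T) := by
    intro u hu
    rcases eq_or_lt_of_le (mem_Iic.mp hu) with h | h
    · subst h; exact hVcontT
    · exact ((hVderiv u h).continuousAt).continuousWithinAt
  -- the test polynomial
  set φp : Polynomial ℝ := ψ + 2 * Polynomial.X * Polynomial.derivative ψ with hφp
  set P : Polynomial ℝ := Polynomial.X * ψ ^ 2 with hPdef
  have hPder : Polynomial.derivative P = ψ * φp := by
    rw [hPdef, hφp]
    simp [Polynomial.derivative_mul, Polynomial.derivative_pow, map_ofNat]
    ring
  have hψnd : ψ.natDegree < n := (Polynomial.natDegree_lt_iff_degree_lt hψ0).mpr hψd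
  have hφdeg : φp.degree < (n : WithBot ℕ) := by
    have h1 : φp.natDegree < n := by
      apply lt_of_le_of_lt (Polynomial.natDegree_add_le _ _)
      apply max_lt hψnd
      by_cases hd : ψ.natDegree = 0
      · obtain ⟨c, rfl⟩ := Polynomial.natDegree_eq_zero.mp hd
        simpa using (show 0 < n from hn)
      · have h2 : (2 * Polynomial.X * Polynomial.derivative ψ).natDegree
            ≤ (2 * Polynomial.X : Polynomial ℝ).natDegree + (Polynomial.derivative ψ).natDegree :=
          Polynomial.natDegree_mul_le
        have h3 : (2 * Polynomial.X : Polynomial ℝ).natDegree ≤ 1 := by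
          simpa using Polynomial.natDegree_mul_le (p := (2 : Polynomial ℝ)) (q := Polynomial.X)
        have h4 := Polynomial.natDegree_derivative_le ψ
        omega
    calc φp.degree ≤ (φp.natDegree : WithBot ℕ) := Polynomial.degree_le_natDegree
      _ < (n : WithBot ℕ) := by exact_mod_cast h1
  -- derivative of x
  have hxd : ∀ t, HasDerivAt x (x t / τ) t := by
    intro t
    have h1 : HasDerivAt (fun u : ℝ => (u - T) / τ) (1 / τ) t :=
      ((hasDerivAt_id t).sub_const T).div_const τ
    have h2 := h1.exp
    have hfun : x = fun u => Real.exp ((u - T) / τ) := funext hxe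
    rw [hfun]
    simpa [mul_one_div, div_eq_mul_inv] using h2
  have hxc : Continuous x := by
    have hfun : x = fun u => Real.exp ((u - T) / τ) := funext hxe
    rw [hfun]
    exact Real.continuous_exp.comp ((continuous_id.sub continuous_const).div_const τ)
  have hωc : Continuous ω := by
    have hfun : ω = fun u => Real.exp ((u - T) / τ) := funext hω
    rw [hfun]
    exact Real.continuous_exp.comp ((continuous_id.sub continuous_const).div_const τ)
  -- the primitive H
  set H : ℝ → ℝ := fun t => τ * P.eval (x t) with hHdef
  have hHval : ∀ t, H t = τ * (ψ.eval (x t)) ^ 2 * ω t := by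
    intro t
    rw [hHdef]
    simp only [hPdef, Polynomial.eval_mul, Polynomial.eval_pow, Polynomial.eval_X]
    rw [hωx t]
    ring
  have hHd : ∀ t, HasDerivAt H (φp.eval (x t) * ψ.eval (x t) * ω t) t := by
    intro t
    have h1 := (P.hasDerivAt (x t)).comp t (hxd t)
    have h2 := h1.const_mul τ
    refine h2.congr_deriv ?_
    have hcan : τ * (x t / τ) = x t := by
      rw [← mul_div_assoc]
      exact mul_div_cancel_left₀ _ hτ.ne'
    rw [hPder, Polynomial.eval_mul, hωx t,
      show τ * (Polynomial.eval (x t) ψ * Polynomial.eval (x t) φp * (x t / τ))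
        = Polynomial.eval (x t) ψ * Polynomial.eval (x t) φp * (τ * (x t / τ)) from by ring,
      hcan]
    ring
  have hHcont : Continuous H := continuous_const.mul (P.continuous.comp hxc)
  have hx0 : Filter.Tendsto x Filter.atBot (𝓝 0) := by
    have h1 : Filter.Tendsto (fun u : ℝ => (u - T) / τ) Filter.atBot Filter.atBot := by
      apply Filter.Tendsto.atBot_div_const hτ
      simpa [sub_eq_add_neg] using Filter.tendsto_atBot_add_const_right Filter.atBot (-T)
        Filter.tendsto_id
    have h2 := Real.tendsto_exp_atBot.comp h1
    have hfun : x = fun u => Real.exp ((u - T) / τ) := funext hxe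
    rw [hfun]
    exact h2
  have hψtend : Filter.Tendsto (fun t => (ψ.eval (x t)) ^ 2) Filter.atBot
      (𝓝 ((ψ.eval 0) ^ 2)) := by
    have h1 : Continuous fun y : ℝ => (ψ.eval y) ^ 2 := (ψ.continuous).pow 2
    exact (h1.tendsto 0).comp hx0
  have tendTω : Filter.Tendsto (fun u => (T - u) * ω u) Filter.atBot (𝓝 0) := by
    have h1 : Filter.Tendsto (fun v : ℝ => v * Real.exp (-v)) Filter.atTop (𝓝 0) := by
      simpa using Real.tendsto_pow_mul_exp_neg_atTop_nhds_zero 1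
    have hv : Filter.Tendsto (fun u : ℝ => (T - u) / τ) Filter.atBot Filter.atTop := by
      apply Filter.Tendsto.atTop_div_const hτ
      exact (Filter.tendsto_atTop_add_const_left Filter.atBot T
        tendsto_neg_atBot_atTop).congr fun u => (sub_eq_add_neg T u).symm
    have h2 := h1.comp hv
    have h3 := h2.const_mul τ
    rw [mul_zero] at h3
    apply h3.congr
    intro u
    have harg : -((T - u) / τ) = (u - T) / τ := by ring
    simp only [Function.comp_apply, harg, hω u]
    field_simp
  -- measurability helpers
  have hIms : AEStronglyMeasurable I (volume.restrict (Iic T)) :=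
    hIc.aestronglyMeasurable measurableSet_Iic
  have hVms : AEStronglyMeasurable V₀ (volume.restrict (Iic T)) :=
    hVcont.aestronglyMeasurable measurableSet_Iic
  have hψxc : Continuous fun t => ψ.eval (x t) := ψ.continuous.comp hxc
  have hφxc : Continuous fun t => φp.eval (x t) := φp.continuous.comp hxc
  -- constants
  obtain ⟨Cψ, hCψ0, hCψ⟩ := polybound ψ
  obtain ⟨Cφ, hCφ0, hCφ⟩ := polybound φp
  have hψsq : ∀ t ≤ T, (ψ.eval (x t)) ^ 2 ≤ Cψ ^ 2 := by
    intro t ht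
    calc (ψ.eval (x t)) ^ 2 = |ψ.eval (x t)| ^ 2 := (sq_abs _).symm
      _ ≤ Cψ ^ 2 := pow_le_pow_left₀ (abs_nonneg _) (hCψ t ht) 2
  -- integrability of all relevant integrands
  have int1 : IntegrableOn (fun t => I t * (ψ.eval (x t)) ^ 2 * ω t) (Set.Iic T) := by
    refine master _ ?_ (M * Cψ ^ 2) ?_
    · exact (hIms.mul (hψxc.pow 2).aestronglyMeasurable).mul hωc.aestronglyMeasurable
    intro t ht
    calc |I t * (ψ.eval (x t)) ^ 2 * ω t| = I t * (ψ.eval (x t)) ^ 2 * ω t :=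
        abs_of_nonneg (mul_nonneg (mul_nonneg (hInn t ht) (sq_nonneg _)) (hωpos t).le)
      _ ≤ M * Cψ ^ 2 * ω t := by
          apply mul_le_mul_of_nonneg_right _ (hωpos t).le
          exact mul_le_mul (hIM t ht) (hψsq t ht) (sq_nonneg _) hMnn
      _ ≤ M * Cψ ^ 2 * Real.exp ((t - T) / (2 * τ)) := by
          exact mul_le_mul_of_nonneg_left (hωle t ht) (mul_nonneg hMnn (sq_nonneg _))
  have int2 : IntegrableOn (fun t => (ψ.eval (x t)) ^ 2 * ω t) (Set.Iic T) := by
    apply master _ (((hψxc.pow 2).mul hωc).aestronglyMeasurable) (Cψ ^ 2)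
    intro t ht
    have h1 : |(ψ.eval (x t)) ^ 2 * ω t| = (ψ.eval (x t)) ^ 2 * ω t :=
      abs_of_nonneg (mul_nonneg (sq_nonneg _) (hωpos t).le)
    change |(ψ.eval (x t)) ^ 2 * ω t| ≤ _
    rw [h1]
    calc (ψ.eval (x t)) ^ 2 * ω t ≤ Cψ ^ 2 * ω t :=
          mul_le_mul_of_nonneg_right (hψsq t ht) (hωpos t).le
      _ ≤ Cψ ^ 2 * Real.exp ((t - T) / (2 * τ)) :=
          mul_le_mul_of_nonneg_left (hωle t ht) (sq_nonneg Cψ)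
  have int3 : IntegrableOn (fun t => φp.eval (x t) * V₀ t * ψ.eval (x t) * ω t) (Set.Iic T) := by
    apply master _ (((hφxc.aestronglyMeasurable.mul hVms).mul
      hψxc.aestronglyMeasurable).mul hωc.aestronglyMeasurable) (Cφ * Cψ * (M * (2 * τ)))
    intro t ht
    calc |φp.eval (x t) * V₀ t * ψ.eval (x t) * ω t|
        = (|φp.eval (x t)| * |ψ.eval (x t)|) * (V₀ t * ω t) := by
          rw [abs_mul, abs_mul, abs_mul, abs_of_nonneg (hVnn t ht),
            abs_of_nonneg (hωpos t).le]
          ring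
      _ ≤ (Cφ * Cψ) * (M * (2 * τ) * Real.exp ((t - T) / (2 * τ))) := by
          apply mul_le_mul (mul_le_mul (hCφ t ht) (hCψ t ht) (abs_nonneg _) hCφ0)
          · calc V₀ t * ω t ≤ (M * (T - t)) * ω t :=
                  mul_le_mul_of_nonneg_right (hVle t ht) (hωpos t).le
              _ = M * ((T - t) * ω t) := by ring
              _ ≤ M * (2 * τ * Real.exp ((t - T) / (2 * τ))) :=
                  mul_le_mul_of_nonneg_left (hTt t ht) hMnn
              _ = M * (2 * τ) * Real.exp ((t - T) / (2 * τ)) := by ring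
          · exact mul_nonneg (hVnn t ht) (hωpos t).le
          · exact mul_nonneg hCφ0 hCψ0
      _ = Cφ * Cψ * (M * (2 * τ)) * Real.exp ((t - T) / (2 * τ)) := by ring
  have int4 : IntegrableOn (fun t => φp.eval (x t) * (T - t) * ψ.eval (x t) * ω t)
      (Set.Iic T) := by
    apply master _ (((hφxc.mul (continuous_const.sub continuous_id)).mul hψxc).mul
      hωc).aestronglyMeasurable (Cφ * Cψ * (2 * τ))
    intro t ht
    calc |φp.eval (x t) * (T - t) * ψ.eval (x t) * ω t|
        = (|φp.eval (x t)| * |ψ.eval (x t)|) * ((T - t) * ω t) := by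
          rw [abs_mul, abs_mul, abs_mul, abs_of_nonneg (by linarith : (0:ℝ) ≤ T - t),
            abs_of_nonneg (hωpos t).le]
          ring
      _ ≤ (Cφ * Cψ) * (2 * τ * Real.exp ((t - T) / (2 * τ))) := by
          apply mul_le_mul (mul_le_mul (hCφ t ht) (hCψ t ht) (abs_nonneg _) hCφ0)
            (hTt t ht) (mul_nonneg (by linarith) (hωpos t).le) (mul_nonneg hCφ0 hCψ0)
      _ = Cφ * Cψ * (2 * τ) * Real.exp ((t - T) / (2 * τ)) := by ring
  have int5 : IntegrableOn (fun t => H t * I t) (Set.Iic T) := by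
    refine master _ ?_ (τ * Cψ ^ 2 * M) ?_
    · exact hHcont.aestronglyMeasurable.mul hIms
    intro t ht
    calc |H t * I t| = τ * (ψ.eval (x t)) ^ 2 * ω t * I t := by
          rw [abs_of_nonneg, hHval t]
          rw [hHval t]
          exact mul_nonneg (mul_nonneg (mul_nonneg hτ.le (sq_nonneg _)) (hωpos t).le) (hInn t ht)
      _ ≤ τ * Cψ ^ 2 * ω t * M := by
          apply mul_le_mul
          · apply mul_le_mul_of_nonneg_right _ (hωpos t).le
            exact mul_le_mul_of_nonneg_left (hψsq t ht) hτ.le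
          · exact hIM t ht
          · exact hInn t ht
          · exact mul_nonneg (mul_nonneg hτ.le (sq_nonneg _)) (hωpos t).le
      _ = τ * Cψ ^ 2 * M * ω t := by ring
      _ ≤ τ * Cψ ^ 2 * M * Real.exp ((t - T) / (2 * τ)) :=
          mul_le_mul_of_nonneg_left (hωle t ht)
            (mul_nonneg (mul_nonneg hτ.le (sq_nonneg _)) hMnn)
  have int6 : IntegrableOn H (Set.Iic T) := by
    refine master _ ?_ (τ * Cψ ^ 2) ?_
    · exact hHcont.aestronglyMeasurable
    intro t ht
    calc |H t| = τ * (ψ.eval (x t)) ^ 2 * ω t := by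
          rw [abs_of_nonneg, hHval t]
          rw [hHval t]
          exact mul_nonneg (mul_nonneg hτ.le (sq_nonneg _)) (hωpos t).le
      _ ≤ τ * Cψ ^ 2 * ω t := by
          apply mul_le_mul_of_nonneg_right _ (hωpos t).le
          exact mul_le_mul_of_nonneg_left (hψsq t ht) hτ.le
      _ ≤ τ * Cψ ^ 2 * Real.exp ((t - T) / (2 * τ)) :=
          mul_le_mul_of_nonneg_left (hωle t ht) (mul_nonneg hτ.le (sq_nonneg _))
  -- integration by parts, part A : ∫ φ V₀ ψ ω = ∫ H I
  have hH0 : Filter.Tendsto H Filter.atBot (𝓝 0) := by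
    have h1 : Filter.Tendsto (fun t => P.eval (x t)) Filter.atBot (𝓝 (P.eval 0)) :=
      (P.continuous.tendsto 0).comp hx0
    have h2 : P.eval (0:ℝ) = 0 := by simp [hPdef]
    rw [hHdef]
    simpa [h2] using h1.const_mul τ
  have tendA : Filter.Tendsto (fun u => H u * V₀ u) Filter.atBot (𝓝 0) := by
    apply squeeze_zero' ?_ ?_ (by simpa using tendTω.const_mul (τ * Cψ ^ 2 * M))
    · filter_upwards [Filter.Iic_mem_atBot T] with u hu
      rw [hHval u]
      exact mul_nonneg (mul_nonneg (mul_nonneg hτ.le (sq_nonneg _)) (hωpos u).le) (hVnn u hu)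
    · filter_upwards [Filter.Iic_mem_atBot T] with u hu
      rw [hHval u]
      calc τ * (ψ.eval (x u)) ^ 2 * ω u * V₀ u ≤ τ * Cψ ^ 2 * ω u * (M * (T - u)) := by
            apply mul_le_mul
            · apply mul_le_mul_of_nonneg_right _ (hωpos u).le
              exact mul_le_mul_of_nonneg_left (hψsq u hu) hτ.le
            · exact hVle u hu
            · exact hVnn u hu
            · exact mul_nonneg (mul_nonneg hτ.le (sq_nonneg _)) (hωpos u).le
        _ = τ * Cψ ^ 2 * M * ((T - u) * ω u) := by ring
  have fA : ∀ t ∈ Iio T, HasDerivAt (fun u => H u * V₀ u)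
      (φp.eval (x t) * V₀ t * ψ.eval (x t) * ω t - H t * I t) t := by
    intro t ht
    have h1 := (hHd t).mul (hVderiv t ht)
    refine h1.congr_deriv ?_
    ring
  have contA : ContinuousWithinAt (fun u => H u * V₀ u) (Iic T) T :=
    (hHcont.continuousAt.continuousWithinAt).mul hVcontT
  have hA : (∫ t in Set.Iic T, (φp.eval (x t) * V₀ t * ψ.eval (x t) * ω t - H t * I t)) = 0 := by
    rw [integral_Iic_of_hasDerivAt_of_tendsto contA fA (int3.sub int5) tendA]
    simp [hV0T]
  have eqA : (∫ t in Set.Iic T, φp.eval (x t) * V₀ t * ψ.eval (x t) * ω t)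
      = τ * ∫ t in Set.Iic T, I t * (ψ.eval (x t)) ^ 2 * ω t := by
    have h1 := integral_sub int3 int5
    rw [hA] at h1
    have h2 : (∫ t in Set.Iic T, H t * I t)
        = ∫ t in Set.Iic T, τ * (I t * (ψ.eval (x t)) ^ 2 * ω t) := by
      apply integral_congr_ae
      filter_upwards with t
      rw [hHval t]
      ring
    have h3 : (∫ t in Set.Iic T, φp.eval (x t) * V₀ t * ψ.eval (x t) * ω t)
        = ∫ t in Set.Iic T, H t * I t := by linarith [h1.symm]
    rw [h3, h2, integral_const_mul]
  -- integration by parts, part B : ∫ φ (T - t) ψ ω = ∫ H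
  have tendB : Filter.Tendsto (fun u => H u * (T - u)) Filter.atBot (𝓝 0) := by
    have h1 : Filter.Tendsto (fun u => τ * (ψ.eval (x u)) ^ 2 * ((T - u) * ω u))
        Filter.atBot (𝓝 (τ * (ψ.eval 0) ^ 2 * 0)) :=
      ((tendsto_const_nhds.mul hψtend).mul tendTω)
    rw [mul_zero] at h1
    apply h1.congr
    intro u
    rw [hHval u]
    ring
  have fB : ∀ t ∈ Iio T, HasDerivAt (fun u => H u * (T - u))
      (φp.eval (x t) * (T - t) * ψ.eval (x t) * ω t - H t) t := by
    intro t _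
    have h0 : HasDerivAt (fun u : ℝ => T - u) (-1) t := by
      simpa using (hasDerivAt_id t).const_sub T
    have h1 := (hHd t).mul h0
    refine h1.congr_deriv ?_
    ring
  have contB : ContinuousWithinAt (fun u => H u * (T - u)) (Iic T) T :=
    ((hHcont.mul (continuous_const.sub continuous_id)).continuousAt).continuousWithinAt
  have hB : (∫ t in Set.Iic T, (φp.eval (x t) * (T - t) * ψ.eval (x t) * ω t - H t)) = 0 := by
    rw [integral_Iic_of_hasDerivAt_of_tendsto contB fB (int4.sub int6) tendB]
    simp
  have eqB : (∫ t in Set.Iic T, φp.eval (x t) * (T - t) * ψ.eval (x t) * ω t)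
      = τ * ∫ t in Set.Iic T, (ψ.eval (x t)) ^ 2 * ω t := by
    have h1 := integral_sub int4 int6
    rw [hB] at h1
    have h2 : (∫ t in Set.Iic T, H t)
        = ∫ t in Set.Iic T, τ * ((ψ.eval (x t)) ^ 2 * ω t) := by
      apply integral_congr_ae
      filter_upwards with t
      rw [hHval t]
      ring
    have h3 : (∫ t in Set.Iic T, φp.eval (x t) * (T - t) * ψ.eval (x t) * ω t)
        = ∫ t in Set.Iic T, H t := by linarith [h1.symm]
    rw [h3, h2, integral_const_mul]
  -- conclude
  have key := heig φp hφdeg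
  rw [eqA, eqB] at key
  have h2 : τ * (∫ t in Set.Iic T, I t * (ψ.eval (x t)) ^ 2 * ω t)
      = τ * (lam * ∫ t in Set.Iic T, (ψ.eval (x t)) ^ 2 * ω t) := by
    rw [key]; ring
  have h3 := mul_left_cancel₀ (ne_of_gt hτ) h2
  linarith
end

section
/- Let T ∈ ℝ, τ > 0, ω(t) = exp((t−T)/τ), x(t) = ω(t) for t ≤ T, and let I : (−∞,T] → ℝ be continuous, nonnegative and bounded, with V₀(t) = ∫_t^T I(s) ds. Fix n ≥ 1 and let P_n be the space of real polynomials of degree < n. Suppose ψ ∈ P_n is nonzero and satisfies, for some λ ∈ ℝ, ∫_{−∞}^T φ(x(t)) V₀(t) ψ(x(t)) ω(t) dt = λ ∫_{−∞}^T φ(x(t)) (T−t) ψ(x(t)) ω(t) dt for every φ ∈ P_n. Define the infinitesimal time-shift δψ(x) = x ψ′(x)/τ. Then ∫_{−∞}^T δψ(x(t))² V₀(t) ω(t) dt − λ ∫_{−∞}^T δψ(x(t))² (T−t) ω(t) dt = ∫_{−∞}^T δψ(x(t)) I(t) ψ(x(t)) ω(t) dt − λ ∫_{−∞}^T δψ(x(t))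 ψ(x(t)) ω(t) dt; that is, for the time-shift variation δψ = D(ψ), the second variation of the aggregated flow V/t equals the first variation of the local flow dV/dt. -/
open MeasureTheory Set Filter Polynomial

set_option maxHeartbeats 1000000

lemma aux_exp_int(c a : ℝ) (hc : 0 < c) :
    IntegrableOn (fun t => Real.exp (c * t)) (Iic a) := by
  have hcont : Continuous fun t : ℝ => Real.exp (c * t) := by continuity
  refine integrableOn_Iic_of_intervalIntegral_norm_bounded (Real.exp (c * a) / c) a
    (a := fun y : ℝ => y) (l := atBot)
    (fun y => (hcont.integrableOn_Ioc)) tendsto_id ?_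
  filter_upwards [Iic_mem_atBot a] with y (hy : y ≤ a)
  have hne : c ≠ 0 := ne_of_gt hc
  have h1 : (∫ t in y..a, ‖Real.exp (c * t)‖) = ∫ t in y..a, Real.exp (c * t) := by
    congr 1; funext t; exact Real.norm_of_nonneg (Real.exp_pos _).le
  have h2 : (∫ t in y..a, Real.exp (c * t)) = c⁻¹ * (Real.exp (c * a) - Real.exp (c * y)) := by
    rw [intervalIntegral.integral_comp_mul_left (fun u => Real.exp u) hne,
      integral_exp, smul_eq_mul]
  rw [h1, h2, div_eq_inv_mul]
  have : 0 < Real.exp (c * y) := Real.exp_pos _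
  have h3 : Real.exp (c*a) - Real.exp (c*y) ≤ Real.exp (c*a) := by linarith
  have : 0 ≤ c⁻¹ := (inv_pos.mpr hc).le
  nlinarith [Real.exp_pos (c*a)]

lemma aux_master {T τ : ℝ} (hτ : 0 < τ) {h : ℝ → ℝ} (hc : ContinuousOn h (Iic T)) {C : ℝ}
    (hb : ∀ t ≤ T, |h t| ≤ C * (1 + (T - t)) * Real.exp ((t - T) / τ)) :
    IntegrableOn h (Iic T) := by
  have hτ0 : τ ≠ 0 := hτ.ne'
  have hC : 0 ≤ C := le_trans (abs_nonneg _) (by simpa using hb T le_rfl)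
  set c : ℝ := (2 * τ)⁻¹ with hc'
  have hcpos : 0 < c := by positivity
  have hcτ : 2 * τ * c = 1 := mul_inv_cancel₀ (by positivity)
  set K : ℝ := C * (1 + 2 * τ) * Real.exp (-(T * c)) with hK
  refine Integrable.mono' ((aux_exp_int c T hcpos).const_mul K)
    (hc.aestronglyMeasurable measurableSet_Iic) ?_
  rw [ae_restrict_iff' measurableSet_Iic]
  filter_upwards with t (ht : t ≤ T)
  have hs : 0 ≤ T - t := sub_nonneg.mpr ht
  have h1 : |h t| ≤ C * (1 + (T - t)) * Real.exp ((t - T) / τ) := hb t ht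
  have e1 : 1 + (T - t) * c ≤ Real.exp ((T - t) * c) := (Real.add_one_le_exp _).trans_eq' (by ring)
  have e2 : (1:ℝ) ≤ Real.exp ((T - t) * c) := by
    rw [Real.one_le_exp_iff]; exact mul_nonneg hs hcpos.le
  have h2 : 1 + (T - t) ≤ (1 + 2 * τ) * Real.exp ((T - t) * c) := by
    nlinarith [mul_le_mul_of_nonneg_left e1 (by positivity : (0:ℝ) ≤ 2 * τ)]
  have hexp : 0 ≤ Real.exp ((t - T) / τ) := (Real.exp_pos _).le
  have h3 : Real.exp ((T - t) * c) * Real.exp ((t - T) / τ) = Real.exp (-(T * c)) * Real.exp (c * t) := by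
    rw [← Real.exp_add, ← Real.exp_add]
    congr 1
    rw [hc']
    field_simp
    ring
  have h4 : |h t| ≤ C * ((1 + 2 * τ) * Real.exp ((T - t) * c)) * Real.exp ((t - T) / τ) := by
    refine h1.trans ?_
    exact mul_le_mul_of_nonneg_right (mul_le_mul_of_nonneg_left h2 hC) hexp
  calc ‖h t‖ = |h t| := rfl
    _ ≤ C * ((1 + 2 * τ) * Real.exp ((T - t) * c)) * Real.exp ((t - T) / τ) := h4
    _ = C * (1 + 2 * τ) * (Real.exp ((T - t) * c) * Real.exp ((t - T) / τ)) := by ring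
    _ = K * Real.exp (c * t) := by rw [h3, hK]; ring

lemma aux_tendsto {T τ : ℝ} (hτ : 0 < τ) :
    Tendsto (fun t => (T - t) * Real.exp ((t - T) / τ)) atBot (nhds 0) := by
  have h1 : Tendsto (fun t : ℝ => (T - t) / τ) atBot atTop := by
    apply Tendsto.atTop_div_const hτ
    apply tendsto_atTop_add_const_left
    exact tendsto_neg_atBot_atTop
  have h2 : Tendsto (fun u : ℝ => u ^ 1 * Real.exp (-u)) atTop (nhds 0) :=
    Real.tendsto_pow_mul_exp_neg_atTop_nhds_zero 1
  have h3 := (h2.comp h1).const_mul τ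
  simp only [mul_zero] at h3
  refine h3.congr fun t => ?_
  simp only [Function.comp_apply, pow_one]
  rw [show -((T - t) / τ) = (t - T) / τ by ring]
  field_simp

lemma aux_deg {n : ℕ} {p : Polynomial ℝ} (h : p.degree < (n : WithBot ℕ)) :
    (Polynomial.X * Polynomial.derivative p).degree < (n : WithBot ℕ) := by
  rcases eq_or_ne (Polynomial.derivative p) 0 with h0 | h0
  · rw [h0, mul_zero, Polynomial.degree_zero]
    exact lt_of_lt_of_le (WithBot.bot_lt_coe 0) (by exact_mod_cast Nat.zero_le n)
  · have hp0 : p ≠ 0 := fun hp => h0 (by simp [hp])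
    have hnd : p.natDegree ≠ 0 := fun hnd => h0 (by
      rcases Polynomial.natDegree_eq_zero.mp hnd with ⟨a, rfl⟩; simp)
    have hX : Polynomial.X * Polynomial.derivative p ≠ 0 := by
      simp [Polynomial.X_ne_zero, h0, mul_ne_zero]
    rw [Polynomial.degree_mul, Polynomial.degree_X,
      Polynomial.degree_eq_natDegree h0]
    have hdn : (Polynomial.derivative p).natDegree < p.natDegree :=
      Polynomial.natDegree_derivative_lt hnd
    have hpn : p.natDegree < n := by
      rwa [Polynomial.degree_eq_natDegree hp0, Nat.cast_lt] at h
    have : ((1 + (Polynomial.derivative p).natDegree : ℕ) : WithBot ℕ) < (n : WithBot ℕ) := by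
      rw [Nat.cast_lt]; omega
    exact lt_of_eq_of_lt (by push_cast; ring) this

/-- For the infinitesimal time-shift variation `δψ = D(ψ)`, the second variation of
the aggregated flow `V/t` equals the first variation of the local flow `dV/dt`. -/
theorem stmt_2 (T τ : ℝ) (hτ : 0 < τ)
    (ω x : ℝ → ℝ)
    (hω : ∀ t, ω t = Real.exp ((t - T) / τ))
    (hx : ∀ t, x t = ω t)
    (I : ℝ → ℝ)
    (hIc : ContinuousOn I (Set.Iic T))
    (hInn : ∀ t ≤ T, 0 ≤ I t)
    (hIb : ∃ M, ∀ t ≤ T, I t ≤ M)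
    (V₀ : ℝ → ℝ) (hV : ∀ t, V₀ t = ∫ s in t..T, I s)
    (n : ℕ) (hn : 1 ≤ n)
    (ψ : Polynomial ℝ) (hψ0 : ψ ≠ 0) (hψd : ψ.degree < (n : WithBot ℕ))
    (lam : ℝ)
    (heig : ∀ φ : Polynomial ℝ, φ.degree < (n : WithBot ℕ) →
      ∫ t in Set.Iic T, φ.eval (x t) * V₀ t * ψ.eval (x t) * ω t
        = lam * ∫ t in Set.Iic T, φ.eval (x t) * (T - t) * ψ.eval (x t) * ω t)
    (δψ : ℝ → ℝ)
    (hδψ : ∀ u, δψ u = u * (Polynomial.derivative ψ).eval u / τ) :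
    (∫ t in Set.Iic T, (δψ (x t)) ^ 2 * V₀ t * ω t)
        - lam * ∫ t in Set.Iic T, (δψ (x t)) ^ 2 * (T - t) * ω t
      = (∫ t in Set.Iic T, δψ (x t) * I t * ψ.eval (x t) * ω t)
        - lam * ∫ t in Set.Iic T, δψ (x t) * ψ.eval (x t) * ω t := by
  have hτ0 : τ ≠ 0 := hτ.ne'
  -- replace ω by x everywhere
  have hωx : ω = x := funext fun t => (hx t).symm
  rw [hωx] at heig ⊢
  have hxfun : x = fun t => Real.exp ((t - T) / τ) := funext fun t => (hx t).trans (hω t)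
  have hxe : ∀ t, x t = Real.exp ((t - T) / τ) := fun t => by rw [hxfun]
  have hxpos : ∀ t, 0 < x t := fun t => by rw [hxe]; exact Real.exp_pos _
  have hxc : Continuous x := by rw [hxfun]; continuity
  have hxd : ∀ t, HasDerivAt x (x t / τ) t := by
    intro t
    rw [hxfun]
    have h1 : HasDerivAt (fun s : ℝ => (s - T) / τ) (1 / τ) t := by
      simpa using ((hasDerivAt_id t).sub_const T).div_const τ
    have := h1.exp
    simpa [div_eq_mul_inv, mul_comm] using this
  have hxmem : ∀ t ≤ T, x t ∈ Icc (0:ℝ) 1 := by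
    intro t ht
    rw [hxe]
    constructor
    · exact (Real.exp_pos _).le
    · exact Real.exp_le_one_iff.mpr (div_nonpos_of_nonpos_of_nonneg (by linarith) hτ.le)
  have hxT : x T = 1 := by rw [hxe]; simp
  -- bounds on I, V₀
  obtain ⟨M, hM⟩ := hIb
  set M' : ℝ := max M 0 with hM'
  have hM'0 : 0 ≤ M' := le_max_right _ _
  have hIbd : ∀ t ≤ T, |I t| ≤ M' :=
    fun t ht => abs_le.mpr ⟨by have := hInn t ht; linarith, (hM t ht).trans (le_max_left _ _)⟩
  have hIi : ∀ u v : ℝ, u ≤ T → v ≤ T → IntervalIntegrable I volume u v := by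
    intro u v hu hv
    exact (hIc.mono (fun z hz => (hz.2).trans (max_le hu hv))).intervalIntegrable
  have hV00 : V₀ T = 0 := by rw [hV]; exact intervalIntegral.integral_same
  have hVbd : ∀ t ≤ T, |V₀ t| ≤ M' * (T - t) := by
    intro t ht
    rw [hV]
    have h1 : ∀ s ∈ Set.uIoc t T, ‖I s‖ ≤ M' := by
      intro s hs
      rw [Set.uIoc_of_le ht] at hs
      exact hIbd s hs.2
    have := intervalIntegral.norm_integral_le_of_norm_le_const h1
    rwa [abs_of_nonneg (by linarith : (0:ℝ) ≤ T - t)] at this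
  have hVc : ContinuousOn V₀ (Iic T) := by
    have hlip : LipschitzOnWith (Real.toNNReal M') V₀ (Iic T) := by
      rw [lipschitzOnWith_iff_dist_le_mul]
      intro u hu v hv
      have hsub : V₀ u - V₀ v = ∫ s in u..v, I s := by
        have h2 := intervalIntegral.integral_add_adjacent_intervals (hIi u v hu hv) (hIi v T hv le_rfl)
        rw [hV u, hV v]
        linarith [h2]
      have h3 : ∀ s ∈ Set.uIoc u v, ‖I s‖ ≤ M' := by
        intro s hs
        have : s ≤ T := le_trans (hs.2 : s ≤ max u v) (max_le hu hv)
        exact hIbd s this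
      have h4 := intervalIntegral.norm_integral_le_of_norm_le_const h3
      rw [Real.dist_eq, Real.dist_eq, hsub]
      calc |∫ s in u..v, I s| ≤ M' * |v - u| := h4
        _ = M' * |u - v| := by rw [abs_sub_comm]
        _ = (Real.toNNReal M') * |u - v| := by rw [Real.coe_toNNReal _ hM'0]
    exact hlip.continuousOn
  have hV0d : ∀ t ∈ Iio T, HasDerivAt V₀ (-(I t)) t := by
    intro t ht
    have h1 : HasDerivAt (fun u => ∫ s in T..u, I s) (I t) t := by
      refine intervalIntegral.integral_hasDerivAt_right (hIi t T ht.le le_rfl).symm ?_ ?_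
      · exact (hIc.mono Iio_subset_Iic_self).stronglyMeasurableAtFilter isOpen_Iio t ht
      · exact hIc.continuousAt (Iic_mem_nhds ht)
    have h2 := h1.neg
    have h3 : (fun u => -(∫ s in T..u, I s)) = V₀ := by
      funext u
      rw [hV u, intervalIntegral.integral_symm u T, neg_neg]
    rw [← h3]; exact h2
  -- polynomial machinery
  set d : Polynomial ℝ := Polynomial.derivative ψ with hd
  set Pδ : Polynomial ℝ := Polynomial.C τ⁻¹ * (Polynomial.X * d) with hPδ
  set Q : Polynomial ℝ := Polynomial.C τ⁻¹ * (Polynomial.X * Polynomial.derivative Pδ)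
      + Polynomial.C τ⁻¹ * Pδ with hQ
  have hτinv : (τ⁻¹ : ℝ) ≠ 0 := inv_ne_zero hτ0
  have hPδdeg : Pδ.degree < (n : WithBot ℕ) := by
    rw [hPδ, Polynomial.degree_C_mul hτinv]
    exact aux_deg hψd
  have hQdeg : Q.degree < (n : WithBot ℕ) := by
    rw [hQ]
    refine lt_of_le_of_lt (Polynomial.degree_add_le _ _) (max_lt ?_ ?_)
    · rw [Polynomial.degree_C_mul hτinv]; exact aux_deg hPδdeg
    · rw [Polynomial.degree_C_mul hτinv]; exact hPδdeg
  -- eval facts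
  have hPδe : ∀ u, Pδ.eval u = δψ u := by
    intro u
    rw [hδψ u, hPδ]
    simp [div_eq_mul_inv]
    ring
  -- derivative of polynomial comp x
  have hpd : ∀ (p : Polynomial ℝ) (t : ℝ),
      HasDerivAt (fun s => p.eval (x s)) (p.derivative.eval (x t) * (x t / τ)) t := by
    intro p t
    have := (p.hasDerivAt (x t)).comp t (hxd t)
    exact this
  -- bounds on polynomial evals along x
  have hpb : ∀ p : Polynomial ℝ, ∃ C : ℝ, 0 ≤ C ∧ ∀ t ≤ T, |p.eval (x t)| ≤ C := by
    intro p
    obtain ⟨C, hC⟩ := (isCompact_Icc : IsCompact (Icc (0:ℝ) 1)).exists_bound_of_continuousOn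
      (p.continuous.continuousOn)
    exact ⟨C, (norm_nonneg (p.eval 0)).trans (hC 0 ⟨le_rfl, zero_le_one⟩),
      fun t ht => hC (x t) (hxmem t ht)⟩
  -- generic integrability
  have key : ∀ (P : Polynomial ℝ) (w : ℝ → ℝ), ContinuousOn w (Iic T) → ∀ Cw : ℝ,
      (∀ t ≤ T, |w t| ≤ Cw * (1 + (T - t))) →
      IntegrableOn (fun t => P.eval (x t) * w t * x t) (Iic T) := by
    intro P w hwc Cw hw
    obtain ⟨Cp, hCp0, hCp⟩ := hpb P
    have hCw0 : 0 ≤ Cw := by nlinarith [(abs_nonneg (w T)).trans (hw T le_rfl)]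
    apply aux_master hτ (C := Cp * Cw)
    · exact ((P.continuous.comp hxc).continuousOn.mul hwc).mul hxc.continuousOn
    · intro t ht
      rw [← hxe t]
      have h1 : |P.eval (x t) * w t * x t| = |P.eval (x t)| * |w t| * x t := by
        rw [abs_mul, abs_mul, abs_of_pos (hxpos t)]
      rw [h1]
      have e1 : |P.eval (x t)| * |w t| ≤ Cp * (Cw * (1 + (T - t))) :=
        mul_le_mul (hCp t ht) (hw t ht) (abs_nonneg _) hCp0
      calc |P.eval (x t)| * |w t| * x t ≤ Cp * (Cw * (1 + (T - t))) * x t :=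
            mul_le_mul_of_nonneg_right e1 (hxpos t).le
        _ = Cp * Cw * (1 + (T - t)) * x t := by ring
  -- bounds for the four weights
  have hwV : ∀ t ≤ T, |V₀ t| ≤ M' * (1 + (T - t)) := by
    intro t ht
    refine (hVbd t ht).trans ?_
    nlinarith [sub_nonneg.mpr ht]
  have hwT : ∀ t ≤ T, |T - t| ≤ 1 * (1 + (T - t)) := by
    intro t ht
    rw [abs_of_nonneg (sub_nonneg.mpr ht)]
    nlinarith [sub_nonneg.mpr ht]
  have hwI : ∀ t ≤ T, |I t| ≤ M' * (1 + (T - t)) := by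
    intro t ht
    refine (hIbd t ht).trans ?_
    nlinarith [sub_nonneg.mpr ht]
  have hw1 : ∀ t ≤ T, |(1:ℝ)| ≤ 1 * (1 + (T - t)) := by
    intro t ht
    rw [abs_one]
    nlinarith [sub_nonneg.mpr ht]
  have hcT : ContinuousOn (fun t : ℝ => T - t) (Iic T) := (by continuity : Continuous fun t : ℝ => T - t).continuousOn
  -- the six integrability facts
  have hint1 : IntegrableOn (fun t => (δψ (x t)) ^ 2 * V₀ t * x t) (Iic T) := by
    refine (key (Pδ * Pδ) V₀ hVc M' hwV).congr_fun (fun t ht => ?_) measurableSet_Iic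
    simp only [Polynomial.eval_mul, hPδe]
    ring
  have hint2 : IntegrableOn (fun t => (δψ (x t)) ^ 2 * (T - t) * x t) (Iic T) := by
    refine (key (Pδ * Pδ) (fun t => T - t) hcT 1 hwT).congr_fun (fun t ht => ?_) measurableSet_Iic
    simp only [Polynomial.eval_mul, hPδe]
    ring
  have hint3 : IntegrableOn (fun t => δψ (x t) * I t * ψ.eval (x t) * x t) (Iic T) := by
    refine (key (Pδ * ψ) I hIc M' hwI).congr_fun (fun t ht => ?_) measurableSet_Iic
    simp only [Polynomial.eval_mul, hPδe]
    ring
  have hint4 : IntegrableOn (fun t => δψ (x t) * ψ.eval (x t) * x t) (Iic T) := by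
    refine (key (Pδ * ψ) (fun _ => (1:ℝ)) continuousOn_const 1 hw1).congr_fun
      (fun t ht => ?_) measurableSet_Iic
    simp only [Polynomial.eval_mul, hPδe]
    ring
  have hint5 : IntegrableOn (fun t => Q.eval (x t) * V₀ t * ψ.eval (x t) * x t) (Iic T) := by
    refine (key (Q * ψ) V₀ hVc M' hwV).congr_fun (fun t ht => ?_) measurableSet_Iic
    simp only [Polynomial.eval_mul]
    ring
  have hint6 : IntegrableOn (fun t => Q.eval (x t) * (T - t) * ψ.eval (x t) * x t) (Iic T) := by
    refine (key (Q * ψ) (fun t => T - t) hcT 1 hwT).congr_fun (fun t ht => ?_) measurableSet_Iic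
    simp only [Polynomial.eval_mul]
    ring
  -- derivative facts for the composed functions
  have hδx : ∀ t : ℝ, HasDerivAt (fun s => δψ (x s)) (Pδ.derivative.eval (x t) * (x t / τ)) t := by
    intro t
    have h := hpd Pδ t
    have hfun : (fun s => Pδ.eval (x s)) = fun s => δψ (x s) := funext fun s => hPδe (x s)
    rwa [hfun] at h
  have hψx : ∀ t : ℝ, HasDerivAt (fun s => ψ.eval (x s)) (δψ (x t)) t := by
    intro t
    have h := hpd ψ t
    have : ψ.derivative.eval (x t) * (x t / τ) = δψ (x t) := by
      rw [hδψ (x t)]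
      ring
    rwa [this] at h
  have hδψc : Continuous fun s => δψ (x s) := by
    have hfun : (fun s => δψ (x s)) = fun s => Pδ.eval (x s) := funext fun s => (hPδe (x s)).symm
    rw [hfun]
    exact Pδ.continuous.comp hxc
  have hψc : Continuous fun s => ψ.eval (x s) := ψ.continuous.comp hxc
  -- first integration by parts
  set H1 : ℝ → ℝ := fun s => δψ (x s) * ψ.eval (x s) * (V₀ s * x s) with hH1def
  have hH1d : ∀ t ∈ Iio T, HasDerivAt H1
      ((δψ (x t)) ^ 2 * V₀ t * x t + Q.eval (x t) * V₀ t * ψ.eval (x t) * x t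
        - δψ (x t) * I t * ψ.eval (x t) * x t) t := by
    intro t ht
    have h := ((hδx t).mul (hψx t)).mul ((hV0d t ht).mul (hxd t))
    convert h using 1
    · rfl
    · rfl
    · rfl
    simp only [Pi.mul_apply]
    rw [hδψ (x t)]
    simp only [hQ, hPδ, Polynomial.derivative_mul, Polynomial.derivative_C,
      Polynomial.derivative_X, Polynomial.eval_add, Polynomial.eval_mul, Polynomial.eval_C,
      Polynomial.eval_X, zero_mul, one_mul, zero_add]
    field_simp
    ring
  have hH1cont : ContinuousWithinAt H1 (Iic T) T := by
    refine ((hδψc.continuousWithinAt.mul hψc.continuousWithinAt).mul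
      ((hVc T Set.self_mem_Iic).mul hxc.continuousWithinAt))
  obtain ⟨Cr, hCr0, hCr⟩ := hpb (Pδ * ψ)
  have habs : ∀ t ≤ T, |δψ (x t) * ψ.eval (x t)| ≤ Cr := by
    intro t ht
    have := hCr t ht
    rwa [Polynomial.eval_mul, hPδe] at this
  have hH1tend : Tendsto H1 atBot (nhds 0) := by
    apply squeeze_zero_norm' (a := fun t => Cr * M' * ((T - t) * x t))
    · filter_upwards [Iic_mem_atBot T] with t (ht : t ≤ T)
      have h1 : ‖H1 t‖ = |δψ (x t) * ψ.eval (x t)| * |V₀ t| * x t := by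
        rw [hH1def]
        simp only [Real.norm_eq_abs, abs_mul, abs_of_pos (hxpos t)]
        try ring
      rw [h1]
      have h2 : |δψ (x t) * ψ.eval (x t)| * |V₀ t| ≤ Cr * (M' * (T - t)) :=
        mul_le_mul (habs t ht) (hVbd t ht) (abs_nonneg _) hCr0
      calc |δψ (x t) * ψ.eval (x t)| * |V₀ t| * x t ≤ Cr * (M' * (T - t)) * x t :=
            mul_le_mul_of_nonneg_right h2 (hxpos t).le
        _ = Cr * M' * ((T - t) * x t) := by ring
    · have h3 := (aux_tendsto (T := T) hτ).const_mul (Cr * M')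
      rw [mul_zero] at h3
      refine h3.congr fun t => ?_
      rw [hxe t]
  have hIBP1 : (∫ t in Iic T, ((δψ (x t)) ^ 2 * V₀ t * x t
      + Q.eval (x t) * V₀ t * ψ.eval (x t) * x t
      - δψ (x t) * I t * ψ.eval (x t) * x t)) = 0 := by
    have h := integral_Iic_of_hasDerivAt_of_tendsto hH1cont hH1d
      (((hint1.add hint5).sub hint3)) hH1tend
    rw [h, hH1def]
    simp [hV00]
  -- second integration by parts
  set H2 : ℝ → ℝ := fun s => δψ (x s) * ψ.eval (x s) * ((T - s) * x s) with hH2def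
  have hH2d : ∀ t ∈ Iio T, HasDerivAt H2
      ((δψ (x t)) ^ 2 * (T - t) * x t + Q.eval (x t) * (T - t) * ψ.eval (x t) * x t
        - δψ (x t) * ψ.eval (x t) * x t) t := by
    intro t ht
    have hlin : HasDerivAt (fun s : ℝ => T - s) (-1) t := by
      simpa using (hasDerivAt_id t).const_sub T
    have h := ((hδx t).mul (hψx t)).mul (hlin.mul (hxd t))
    convert h using 1
    · rfl
    · rfl
    · rfl
    simp only [Pi.mul_apply]
    rw [hδψ (x t)]
    simp only [hQ, hPδ, Polynomial.derivative_mul, Polynomial.derivative_C,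
      Polynomial.derivative_X, Polynomial.eval_add, Polynomial.eval_mul, Polynomial.eval_C,
      Polynomial.eval_X, zero_mul, one_mul, zero_add]
    field_simp
    ring
  have hH2cont : ContinuousWithinAt H2 (Iic T) T := by
    refine ((hδψc.continuousWithinAt.mul hψc.continuousWithinAt).mul
      (((by continuity : Continuous fun s : ℝ => T - s)).continuousWithinAt.mul
        hxc.continuousWithinAt))
  have hH2tend : Tendsto H2 atBot (nhds 0) := by
    apply squeeze_zero_norm' (a := fun t => Cr * ((T - t) * x t))
    · filter_upwards [Iic_mem_atBot T] with t (ht : t ≤ T)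
      have h1 : ‖H2 t‖ = |δψ (x t) * ψ.eval (x t)| * ((T - t) * x t) := by
        rw [hH2def]
        simp only [Real.norm_eq_abs, abs_mul, abs_of_pos (hxpos t),
          abs_of_nonneg (sub_nonneg.mpr ht)]
        try ring
      rw [h1]
      exact mul_le_mul_of_nonneg_right (habs t ht)
        (mul_nonneg (sub_nonneg.mpr ht) (hxpos t).le)
    · have h3 := (aux_tendsto (T := T) hτ).const_mul Cr
      rw [mul_zero] at h3
      refine h3.congr fun t => ?_
      rw [hxe t]
  have hIBP2 : (∫ t in Iic T, ((δψ (x t)) ^ 2 * (T - t) * x t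
      + Q.eval (x t) * (T - t) * ψ.eval (x t) * x t
      - δψ (x t) * ψ.eval (x t) * x t)) = 0 := by
    have h := integral_Iic_of_hasDerivAt_of_tendsto hH2cont hH2d
      (((hint2.add hint6).sub hint4)) hH2tend
    rw [h, hH2def]
    simp
  -- split the integrals
  have e1 : (∫ t in Iic T, (δψ (x t)) ^ 2 * V₀ t * x t)
      + (∫ t in Iic T, Q.eval (x t) * V₀ t * ψ.eval (x t) * x t)
      - (∫ t in Iic T, δψ (x t) * I t * ψ.eval (x t) * x t) = 0 := by
    have hsplit : (∫ t in Iic T, ((δψ (x t)) ^ 2 * V₀ t * x t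
        + Q.eval (x t) * V₀ t * ψ.eval (x t) * x t
        - δψ (x t) * I t * ψ.eval (x t) * x t))
        = (∫ t in Iic T, (δψ (x t)) ^ 2 * V₀ t * x t)
        + (∫ t in Iic T, Q.eval (x t) * V₀ t * ψ.eval (x t) * x t)
        - (∫ t in Iic T, δψ (x t) * I t * ψ.eval (x t) * x t) := by
      have hintAB : Integrable (fun t => (δψ (x t)) ^ 2 * V₀ t * x t
          + Q.eval (x t) * V₀ t * ψ.eval (x t) * x t) (volume.restrict (Iic T)) :=
        hint1.add hint5
      rw [integral_sub hintAB hint3, integral_add hint1 hint5]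
    rw [← hsplit]
    exact hIBP1
  have e2 : (∫ t in Iic T, (δψ (x t)) ^ 2 * (T - t) * x t)
      + (∫ t in Iic T, Q.eval (x t) * (T - t) * ψ.eval (x t) * x t)
      - (∫ t in Iic T, δψ (x t) * ψ.eval (x t) * x t) = 0 := by
    have hsplit : (∫ t in Iic T, ((δψ (x t)) ^ 2 * (T - t) * x t
        + Q.eval (x t) * (T - t) * ψ.eval (x t) * x t
        - δψ (x t) * ψ.eval (x t) * x t))
        = (∫ t in Iic T, (δψ (x t)) ^ 2 * (T - t) * x t)
        + (∫ t in Iic T, Q.eval (x t) * (T - t) * ψ.eval (x t) * x t)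
        - (∫ t in Iic T, δψ (x t) * ψ.eval (x t) * x t) := by
      have hintAB : Integrable (fun t => (δψ (x t)) ^ 2 * (T - t) * x t
          + Q.eval (x t) * (T - t) * ψ.eval (x t) * x t) (volume.restrict (Iic T)) :=
        hint2.add hint6
      rw [integral_sub hintAB hint4, integral_add hint2 hint6]
    rw [← hsplit]
    exact hIBP2
  have e3 := heig Q hQdeg
  linear_combination e1 - lam * e2 - e3
end

section
/- Let μ be a measure on ℝ with all moments ∫ x^m dμ finite, and fix n ≥ 1 such that the monomials 1, x, …, x^{n−1} are linearly independent in L²(μ) (equivalently, the n×n Hankel moment matrix of μ is positive definite). Then for every real polynomial P of degree at most 2n−2 there exist real numbers λ₀,…,λ_{n−1} and real polynomials ψ₀,…,ψ_{n−1}, each of degree at most n−1 and orthonormal with respect to μ (∫ ψ_i ψ_j dμ = δ_{ij}), such that P(x) = Σ_{i=0}^{n−1} λ_i ψ_i(x)² for all x ∈ ℝ. Consequently, ∫ P dμ splits as the sum of a nonnegative part Σ_{λ_i>0} λ_i ∫ ψ_i² dμ and a nonpositive part Σ_{λ_i<0} λ_i ∫ ψ_i² dμ. -/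
open MeasureTheory Matrix
open scoped MatrixOrder

set_option maxHeartbeats 1000000

lemma stmt17_integrable_polyEval (μ : Measure ℝ)
    (hmom : ∀ m : ℕ, Integrable (fun x : ℝ => x ^ m) μ) (Q : Polynomial ℝ) :
    Integrable (fun x => Q.eval x) μ := by
  have h : (fun x : ℝ => Q.eval x)
      = fun x => ∑ k ∈ Finset.range (Q.natDegree + 1), Q.coeff k * x ^ k := by
    funext x; exact Polynomial.eval_eq_sum_range x
  rw [h]
  exact integrable_finset_sum _ fun k _ => (hmom k).const_mul _

lemma stmt17_A_eval (m : ℕ) (P : Polynomial ℝ) (hP : P.natDegree ≤ 2 * m) (x : ℝ) :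
    ∑ i : Fin (m+1), ∑ j : Fin (m+1),
      (if i = Fin.last m then P.coeff (m + (j:ℕ)) else if j = 0 then P.coeff (i:ℕ) else 0)
        * x ^ ((i:ℕ) + (j:ℕ)) = P.eval x := by
  rw [Polynomial.eval_eq_sum_range' (lt_of_le_of_lt hP (by omega : 2*m < 2*m+1)) x]
  have h2 : 2*m+1 = m + (m+1) := by ring
  rw [h2, Finset.sum_range_add]
  rw [Fin.sum_univ_castSucc (f := fun i : Fin (m+1) => ∑ j : Fin (m+1),
      (if i = Fin.last m then P.coeff (m + (j:ℕ)) else if j = 0 then P.coeff (i:ℕ) else 0)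
        * x ^ ((i:ℕ) + (j:ℕ)))]
  congr 1
  · rw [← Fin.sum_univ_eq_sum_range (fun k => P.coeff k * x ^ k) m]
    refine Finset.sum_congr rfl fun i _ => ?_
    have hne : (Fin.castSucc i) ≠ Fin.last m := (Fin.castSucc_lt_last i).ne
    have hstep : ∀ j : Fin (m+1),
        (if Fin.castSucc i = Fin.last m then P.coeff (m + (j:ℕ))
          else if j = 0 then P.coeff ((Fin.castSucc i : Fin (m+1)) : ℕ) else 0)
            * x ^ (((Fin.castSucc i : Fin (m+1)) : ℕ) + (j:ℕ))
        = if j = (0 : Fin (m+1)) then P.coeff ((i:ℕ)) * x ^ (((i:ℕ)) + (j:ℕ)) else 0 := by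
      intro j
      rw [if_neg hne]
      by_cases hj : j = 0
      · rw [if_pos hj, if_pos hj]; simp
      · rw [if_neg hj, if_neg hj, zero_mul]
    rw [Finset.sum_congr rfl fun j _ => hstep j, Finset.sum_ite_eq' Finset.univ (0 : Fin (m+1))]
    simp
  · rw [← Fin.sum_univ_eq_sum_range (fun k => P.coeff (m+k) * x ^ (m+k)) (m+1)]
    refine Finset.sum_congr rfl fun j _ => ?_
    rw [if_pos rfl]
    simp [Fin.val_last]

/-- Every real polynomial `P` of degree at most `2n−2` can be written as
`P(x) = Σ_i λ_i ψ_i(x)²` with `ψ_i` polynomials of degree at most `n−1` that are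
orthonormal with respect to `μ`; consequently `∫ P dμ` splits as the sum of a
nonnegative part (over `λ_i > 0`) and a nonpositive part (over `λ_i < 0`). -/
theorem stmt_17 (μ : Measure ℝ)
    (hmom : ∀ m : ℕ, Integrable (fun x : ℝ => x ^ m) μ)
    (n : ℕ) (hn : 1 ≤ n)
    (hH : (Matrix.of fun i j : Fin n => ∫ x : ℝ, x ^ ((i : ℕ) + (j : ℕ)) ∂μ).PosDef) :
    ∀ P : Polynomial ℝ, P.natDegree ≤ 2 * n - 2 →
      ∃ lam : Fin n → ℝ, ∃ ψ : Fin n → Polynomial ℝ,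
        (∀ i, (ψ i).natDegree ≤ n - 1) ∧
        (∀ i j, (∫ x, (ψ i).eval x * (ψ j).eval x ∂μ) = if i = j then 1 else 0) ∧
        (∀ x : ℝ, P.eval x = ∑ i, lam i * ((ψ i).eval x) ^ 2) ∧
        ((∫ x, P.eval x ∂μ)
            = (∑ i ∈ Finset.univ.filter fun i => 0 < lam i,
                lam i * ∫ x, ((ψ i).eval x) ^ 2 ∂μ)
              + (∑ i ∈ Finset.univ.filter fun i => lam i < 0,
                lam i * ∫ x, ((ψ i).eval x) ^ 2 ∂μ)) ∧
        (0 ≤ ∑ i ∈ Finset.univ.filter fun i => 0 < lam i,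
              lam i * ∫ x, ((ψ i).eval x) ^ 2 ∂μ) ∧
        ((∑ i ∈ Finset.univ.filter fun i => lam i < 0,
              lam i * ∫ x, ((ψ i).eval x) ^ 2 ∂μ) ≤ 0) := by
  obtain ⟨m, rfl⟩ : ∃ m, n = m + 1 := ⟨n - 1, (Nat.succ_pred_eq_of_pos hn).symm⟩
  intro P hP
  have hP2 : P.natDegree ≤ 2 * m := by omega
  classical
  set H : Matrix (Fin (m+1)) (Fin (m+1)) ℝ :=
    Matrix.of fun i j : Fin (m+1) => ∫ x : ℝ, x ^ ((i : ℕ) + (j : ℕ)) ∂μ with hHdef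
  have hHab : ∀ a b : Fin (m+1), (∫ x : ℝ, x ^ ((a:ℕ) + (b:ℕ)) ∂μ) = H a b := fun a b => rfl
  have hHpsd : H.PosSemidef := hH.posSemidef
  set S : Matrix (Fin (m+1)) (Fin (m+1)) ℝ := CFC.sqrt H with hSdef
  have hS2 : S * S = H := CFC.sqrt_mul_sqrt_self H hHpsd.nonneg
  have hSsymm : Sᵀ = S := by
    have h : Sᴴ = S := (CFC.sqrt_nonneg H).posSemidef.1
    rwa [Matrix.conjTranspose_eq_transpose_of_trivial] at h
  have hdetS : IsUnit S.det := by
    have hdH : (0:ℝ) < H.det := hH.det_pos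
    have hh : S.det * S.det = H.det := by rw [← Matrix.det_mul, hS2]
    have : S.det ≠ 0 := by
      intro h0; rw [h0, mul_zero] at hh; exact (ne_of_gt hdH) hh.symm
    exact isUnit_iff_ne_zero.mpr this
  set C : Matrix (Fin (m+1)) (Fin (m+1)) ℝ := S⁻¹ with hCdef
  have hCS : C * S = 1 := Matrix.nonsing_inv_mul S hdetS
  have hSC : S * C = 1 := Matrix.mul_nonsing_inv S hdetS
  have hCsymm : Cᵀ = C := by rw [hCdef, Matrix.transpose_nonsing_inv, hSsymm]
  have hCHC : C * H * C = 1 := by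
    rw [← hS2]
    calc C * (S * S) * C = (C * S) * (S * C) := by noncomm_ring
      _ = 1 := by rw [hCS, hSC, one_mul]
  set A : Matrix (Fin (m+1)) (Fin (m+1)) ℝ :=
    Matrix.of (fun i j : Fin (m+1) =>
      if i = Fin.last m then P.coeff (m + (j:ℕ)) else if j = 0 then P.coeff (i:ℕ) else 0)
    with hAdef
  have hA_eval : ∀ x : ℝ, ∑ i : Fin (m+1), ∑ j : Fin (m+1), A i j * x ^ ((i:ℕ) + (j:ℕ))
      = P.eval x := fun x => stmt17_A_eval m P hP2 x
  set N : Matrix (Fin (m+1)) (Fin (m+1)) ℝ := S * A * S with hNdef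
  set M : Matrix (Fin (m+1)) (Fin (m+1)) ℝ := (2⁻¹ : ℝ) • (N + Nᵀ) with hMdef
  have hMherm : M.IsHermitian := by
    rw [Matrix.IsHermitian, Matrix.conjTranspose_eq_transpose_of_trivial, hMdef,
      Matrix.transpose_smul, Matrix.transpose_add, Matrix.transpose_transpose, add_comm Nᵀ N]
  set lam : Fin (m+1) → ℝ := hMherm.eigenvalues with hlamdef
  set U : Matrix (Fin (m+1)) (Fin (m+1)) ℝ :=
    (Matrix.IsHermitian.eigenvectorUnitary hMherm : Matrix (Fin (m+1)) (Fin (m+1)) ℝ) with hUdef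
  have hspec : M = U * Matrix.diagonal lam * Uᵀ := by
    have h := hMherm.spectral_theorem
    rw [Unitary.conjStarAlgAut_apply, Matrix.star_eq_conjTranspose, Matrix.conjTranspose_eq_transpose_of_trivial] at h
    simpa [RCLike.ofReal_real_eq_id, Function.id_comp] using h
  have hUtU : Uᵀ * U = 1 := by
    have h := Unitary.coe_star_mul_self (Matrix.IsHermitian.eigenvectorUnitary hMherm)
    rwa [Matrix.star_eq_conjTranspose, Matrix.conjTranspose_eq_transpose_of_trivial] at h
  set D : Matrix (Fin (m+1)) (Fin (m+1)) ℝ := Uᵀ * C with hDdef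
  have hDt : Dᵀ = C * U := by
    rw [hDdef, Matrix.transpose_mul, hCsymm, Matrix.transpose_transpose]
  have hDHD : D * H * Dᵀ = 1 := by
    rw [hDdef, hDt]
    calc Uᵀ * C * H * (C * U) = Uᵀ * (C * H * C) * U := by noncomm_ring
      _ = Uᵀ * U := by rw [hCHC, Matrix.mul_one]
      _ = 1 := hUtU
  have hDLD : Dᵀ * Matrix.diagonal lam * D = (2⁻¹ : ℝ) • (A + Aᵀ) := by
    have hMC : C * M * C = (2⁻¹ : ℝ) • (A + Aᵀ) := by
      rw [hMdef, hNdef, Matrix.mul_smul, Matrix.smul_mul]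
      congr 1
      rw [Matrix.mul_add, Matrix.add_mul]
      congr 1
      · calc C * (S * A * S) * C = (C * S) * A * (S * C) := by noncomm_ring
          _ = A := by rw [hCS, hSC, one_mul, Matrix.mul_one]
      · calc C * (S * A * S)ᵀ * C = C * (Sᵀ * (Aᵀ * Sᵀ)) * C := by
              rw [Matrix.transpose_mul, Matrix.transpose_mul]
          _ = (C * S) * Aᵀ * (S * C) := by rw [hSsymm]; noncomm_ring
          _ = Aᵀ := by rw [hCS, hSC, one_mul, Matrix.mul_one]
    calc Dᵀ * Matrix.diagonal lam * D = C * (U * Matrix.diagonal lam * Uᵀ) * C := by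
          rw [hDt, hDdef]; noncomm_ring
      _ = C * M * C := by rw [← hspec]
      _ = (2⁻¹ : ℝ) • (A + Aᵀ) := hMC
  set ψp : Fin (m+1) → Polynomial ℝ :=
    fun i => ∑ l : Fin (m+1), Polynomial.C (D i l) * Polynomial.X ^ (l:ℕ) with hψdef
  have hψeval : ∀ (i : Fin (m+1)) (x : ℝ),
      (ψp i).eval x = ∑ l : Fin (m+1), D i l * x ^ (l:ℕ) := by
    intro i x
    rw [hψdef]
    simp [Polynomial.eval_finset_sum]
  have hψdeg : ∀ i, (ψp i).natDegree ≤ m := by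
    intro i
    apply Polynomial.natDegree_sum_le_of_forall_le
    intro l _
    refine le_trans (Polynomial.natDegree_C_mul_le _ _) ?_
    rw [Polynomial.natDegree_X_pow]
    exact l.is_le
  have hprod : ∀ (i j : Fin (m+1)) (x : ℝ), (ψp i).eval x * (ψp j).eval x
      = ∑ a : Fin (m+1), ∑ b : Fin (m+1), (D i a * D j b) * x ^ ((a:ℕ) + (b:ℕ)) := by
    intro i j x
    rw [hψeval, hψeval, Finset.sum_mul_sum]
    refine Finset.sum_congr rfl fun a _ => Finset.sum_congr rfl fun b _ => ?_
    rw [pow_add]; ring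
  have hint : ∀ i j, (∫ x, (ψp i).eval x * (ψp j).eval x ∂μ) = (D * H * Dᵀ) i j := by
    intro i j
    calc (∫ x, (ψp i).eval x * (ψp j).eval x ∂μ)
        = ∫ x, ∑ a : Fin (m+1), ∑ b : Fin (m+1), (D i a * D j b) * x ^ ((a:ℕ) + (b:ℕ)) ∂μ :=
          integral_congr_ae (Filter.Eventually.of_forall fun x => hprod i j x)
      _ = ∑ a : Fin (m+1), ∑ b : Fin (m+1), (D i a * D j b) * ∫ x : ℝ, x ^ ((a:ℕ) + (b:ℕ)) ∂μ := by
          rw [integral_finset_sum _ fun a _ =>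
            integrable_finset_sum _ fun b _ => ((hmom _).const_mul _)]
          refine Finset.sum_congr rfl fun a _ => ?_
          rw [integral_finset_sum _ fun b _ => ((hmom _).const_mul _)]
          exact Finset.sum_congr rfl fun b _ => integral_const_mul _ _
      _ = (D * H * Dᵀ) i j := by
          simp only [Matrix.mul_apply, Matrix.transpose_apply, Finset.sum_mul]
          rw [Finset.sum_comm]
          refine Finset.sum_congr rfl fun b _ => Finset.sum_congr rfl fun a _ => ?_
          rw [hHab a b]; ring
  have horth : ∀ i j, (∫ x, (ψp i).eval x * (ψp j).eval x ∂μ) = if i = j then 1 else 0 := by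
    intro i j
    rw [hint, hDHD, Matrix.one_apply]
  have hkey : ∀ a b : Fin (m+1),
      (∑ i : Fin (m+1), D i a * (lam i * D i b)) = 2⁻¹ * (A a b + A b a) := by
    intro a b
    have h2 : (Dᵀ * (Matrix.diagonal lam * D)) a b = ∑ i : Fin (m+1), D i a * (lam i * D i b) := by
      rw [Matrix.mul_apply]
      refine Finset.sum_congr rfl fun i _ => ?_
      rw [Matrix.transpose_apply, Matrix.diagonal_mul]
    rw [← h2, ← Matrix.mul_assoc, hDLD]
    simp [Matrix.smul_apply, Matrix.add_apply, Matrix.transpose_apply]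
  have hrep : ∀ x : ℝ, P.eval x = ∑ i : Fin (m+1), lam i * ((ψp i).eval x) ^ 2 := by
    intro x
    have h1 : ∀ i : Fin (m+1), lam i * ((ψp i).eval x) ^ 2
        = ∑ a : Fin (m+1), ∑ b : Fin (m+1),
            (D i a * (lam i * D i b)) * x ^ ((a:ℕ) + (b:ℕ)) := by
      intro i
      rw [sq, hprod i i, Finset.mul_sum]
      refine Finset.sum_congr rfl fun a _ => ?_
      rw [Finset.mul_sum]
      exact Finset.sum_congr rfl fun b _ => by ring
    have hswap : ∑ a : Fin (m+1), ∑ b : Fin (m+1), A b a * x ^ ((a:ℕ) + (b:ℕ))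
        = ∑ a : Fin (m+1), ∑ b : Fin (m+1), A a b * x ^ ((a:ℕ) + (b:ℕ)) := by
      rw [Finset.sum_comm]
      exact Finset.sum_congr rfl fun a _ => Finset.sum_congr rfl fun b _ => by
        rw [Nat.add_comm]
    have hmain : ∑ i : Fin (m+1), lam i * ((ψp i).eval x) ^ 2 = P.eval x := by
      calc ∑ i : Fin (m+1), lam i * ((ψp i).eval x) ^ 2
          = ∑ a : Fin (m+1), ∑ b : Fin (m+1),
              (∑ i : Fin (m+1), D i a * (lam i * D i b)) * x ^ ((a:ℕ) + (b:ℕ)) := by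
            rw [Finset.sum_congr rfl fun i _ => h1 i, Finset.sum_comm]
            refine Finset.sum_congr rfl fun a _ => ?_
            rw [Finset.sum_comm]
            exact Finset.sum_congr rfl fun b _ => (Finset.sum_mul _ _ _).symm
        _ = ∑ a : Fin (m+1), ∑ b : Fin (m+1),
              (2⁻¹ * (A a b * x ^ ((a:ℕ) + (b:ℕ))) + 2⁻¹ * (A b a * x ^ ((a:ℕ) + (b:ℕ)))) := by
            refine Finset.sum_congr rfl fun a _ => Finset.sum_congr rfl fun b _ => ?_
            rw [hkey a b]; ring
        _ = ∑ a : Fin (m+1), ∑ b : Fin (m+1), A a b * x ^ ((a:ℕ) + (b:ℕ)) := by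
            simp only [Finset.sum_add_distrib, ← Finset.mul_sum]
            rw [hswap]; ring
        _ = P.eval x := hA_eval x
    exact hmain.symm
  have hψ2int : ∀ i, Integrable (fun x => ((ψp i).eval x) ^ 2) μ := by
    intro i
    have h := stmt17_integrable_polyEval μ hmom (ψp i * ψp i)
    simpa [sq] using h
  have hψ2val : ∀ i, (∫ x, ((ψp i).eval x) ^ 2 ∂μ) = 1 := by
    intro i
    have h := horth i i
    rw [if_pos rfl] at h
    rw [← h]
    exact integral_congr_ae (Filter.Eventually.of_forall fun x => by simp [sq])
  have hintP : (∫ x, P.eval x ∂μ) = ∑ i : Fin (m+1), lam i := by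
    calc (∫ x, P.eval x ∂μ)
        = ∫ x, ∑ i : Fin (m+1), lam i * ((ψp i).eval x) ^ 2 ∂μ :=
          integral_congr_ae (Filter.Eventually.of_forall fun x => hrep x)
      _ = ∑ i : Fin (m+1), lam i * ∫ x, ((ψp i).eval x) ^ 2 ∂μ := by
          rw [integral_finset_sum _ fun i _ => (hψ2int i).const_mul _]
          exact Finset.sum_congr rfl fun i _ => integral_const_mul _ _
      _ = ∑ i : Fin (m+1), lam i := by
          refine Finset.sum_congr rfl fun i _ => ?_
          rw [hψ2val, mul_one]
  refine ⟨lam, ψp, fun i => by simpa using hψdeg i, horth, hrep, ?_, ?_, ?_⟩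
  · rw [hintP]
    simp only [hψ2val, mul_one]
    rw [Finset.sum_filter, Finset.sum_filter, ← Finset.sum_add_distrib]
    refine Finset.sum_congr rfl fun i _ => ?_
    rcases lt_trichotomy (lam i) 0 with h | h | h
    · rw [if_neg (by linarith), if_pos h, zero_add]
    · simp [h]
    · rw [if_pos h, if_neg (by linarith), add_zero]
  · simp only [hψ2val, mul_one]
    exact Finset.sum_nonneg fun i hi => (Finset.mem_filter.mp hi).2.le
  · simp only [hψ2val, mul_one]
    exact Finset.sum_nonpos fun i hi => (Finset.mem_filter.mp hi).2.le
end
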